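/- arXiv:1302.5729 — 11 statements merged into one kernel-verified Lean document; each statement's English description precedes it below -/
import Mathlib

section
/- Let H be a real M × N matrix, y ∈ ℝ^M, λ₀,…,λ_{N−1} > 0, and let φ : ℝ × ℝ → ℝ be a parametric penalty, writing φ(x; a). Suppose R is a positive definite diagonal N × N matrix with diagonal entries r₀,…,r_{N−1} > 0 such that HᵀH − R is positive semidefinite, and suppose that for each n the scalar function x ↦ ½x² + (λₙ/rₙ)·φ(x; aₙ) is strictly convex on ℝ. Then the function F : ℝ^N → ℝ defined by F(x) = ½‖y − Hx‖₂² + Σ_{n=0}^{N−1} λₙ φ(xₙ; aₙ) is strictly convex. -/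
open Matrix

/-- If `R = diag(r)` with `r n > 0` satisfies `HᵀH - R ⪰ 0` and, for each `n`,
`x ↦ ½x² + (λₙ/rₙ)·φ(x; aₙ)` is strictly convex, then the total cost
`F(x) = ½‖y - Hx‖² + Σₙ λₙ φ(xₙ; aₙ)` is strictly convex. -/
theorem strictConvex_of_diagonal_lower_bound
    (M N : ℕ) (H : Matrix (Fin M) (Fin N) ℝ) (y : Fin M → ℝ)
    (lam r a : Fin N → ℝ)
    (hlam : ∀ n, 0 < lam n) (hr : ∀ n, 0 < r n)
    (φ : ℝ → ℝ → ℝ)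
    (hR : (Hᵀ * H - Matrix.diagonal r).PosSemidef)
    (hconv : ∀ n, StrictConvexOn ℝ Set.univ
      (fun x : ℝ => (1/2) * x^2 + (lam n / r n) * φ x (a n))) :
    StrictConvexOn ℝ Set.univ
      (fun x : Fin N → ℝ =>
        (1/2) * ∑ m, (y m - H.mulVec x m)^2 + ∑ n, lam n * φ (x n) (a n)) := by
  refine ⟨convex_univ, ?_⟩
  intro x _ z _ hxz t s ht hs hts
  simp only [smul_eq_mul]
  set w : Fin N → ℝ := t • x + s • z with hw
  have hwn : ∀ n, w n = t * x n + s * z n := fun n => rfl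
  have hmv : ∀ m, H.mulVec w m = t * H.mulVec x m + s * H.mulVec z m := by
    intro m
    rw [hw, mulVec_add, mulVec_smul, mulVec_smul]
    simp
  have key : ∀ α u v : ℝ, (α - (t*u + s*v))^2
      = t*(α-u)^2 + s*(α-v)^2 - t*s*(u-v)^2 := by
    intro α u v
    have h : s = 1 - t := by linarith
    subst h; ring
  -- (A) data term identity
  have hA : ∑ m, (y m - H.mulVec w m)^2
      = t * ∑ m, (y m - H.mulVec x m)^2 + s * ∑ m, (y m - H.mulVec z m)^2
        - t*s * ∑ m, (H.mulVec x m - H.mulVec z m)^2 := by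
    rw [Finset.mul_sum, Finset.mul_sum, Finset.mul_sum, ← Finset.sum_add_distrib,
      ← Finset.sum_sub_distrib]
    refine Finset.sum_congr rfl fun m _ => ?_
    rw [hmv m]; exact key _ _ _
  -- (B) quadratic coordinate identity
  have hB : ∑ n, r n * (w n)^2
      = t * ∑ n, r n * (x n)^2 + s * ∑ n, r n * (z n)^2
        - t*s * ∑ n, r n * (x n - z n)^2 := by
    rw [Finset.mul_sum, Finset.mul_sum, Finset.mul_sum, ← Finset.sum_add_distrib,
      ← Finset.sum_sub_distrib]
    refine Finset.sum_congr rfl fun n _ => ?_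
    have h : s = 1 - t := by linarith
    rw [hwn n]; subst h; ring
  -- (C) PSD inequality
  have hC : ∑ n, r n * (x n - z n)^2 ≤ ∑ m, (H.mulVec x m - H.mulVec z m)^2 := by
    have hd := hR.dotProduct_mulVec_nonneg (x - z)
    rw [star_trivial] at hd
    have e1 : (x - z) ⬝ᵥ (Hᵀ * H - Matrix.diagonal r).mulVec (x - z)
        = ∑ m, (H.mulVec (x - z) m)^2 - ∑ n, r n * ((x - z) n)^2 := by
      rw [sub_mulVec, dotProduct_sub, ← mulVec_mulVec, dotProduct_mulVec,
        vecMul_transpose]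
      congr 1
      · simp [dotProduct, sq]
      · simp [dotProduct, mulVec_diagonal]
        exact Finset.sum_congr rfl fun n _ => by ring
    rw [e1] at hd
    have e2 : ∀ m, H.mulVec (x - z) m = H.mulVec x m - H.mulVec z m := by
      intro m; rw [mulVec_sub]; simp
    have e3 : ∀ n, (x - z) n = x n - z n := fun n => rfl
    simp only [e2, e3] at hd
    linarith
  -- strict per-coordinate inequality
  have hstrict : ∀ n, x n ≠ z n →
      (1/2)*r n*(w n)^2 + lam n * φ (w n) (a n)
        < t * ((1/2)*r n*(x n)^2 + lam n * φ (x n) (a n))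
          + s * ((1/2)*r n*(z n)^2 + lam n * φ (z n) (a n)) := by
    intro n hne
    have hk := (hconv n).2 (Set.mem_univ (x n)) (Set.mem_univ (z n)) hne ht hs hts
    simp only [smul_eq_mul] at hk
    have hrn : r n ≠ 0 := (hr n).ne'
    have hc : lam n = (lam n / r n) * r n := (div_mul_cancel₀ _ hrn).symm
    rw [hwn n, hc]
    nlinarith [mul_lt_mul_of_pos_left hk (hr n)]
  -- (D) strictly convex separable part
  have hD : ∑ n, ((1/2)*r n*(w n)^2 + lam n * φ (w n) (a n))
      < t * ∑ n, ((1/2)*r n*(x n)^2 + lam n * φ (x n) (a n))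
        + s * ∑ n, ((1/2)*r n*(z n)^2 + lam n * φ (z n) (a n)) := by
    rw [Finset.mul_sum, Finset.mul_sum, ← Finset.sum_add_distrib]
    apply Finset.sum_lt_sum
    · intro n _
      by_cases hne : x n = z n
      · have hwz : w n = z n := by rw [hwn n, hne, ← add_mul, hts, one_mul]
        rw [hwz, hne, ← add_mul, hts, one_mul]
      · exact (hstrict n hne).le
    · obtain ⟨n, hn⟩ := Function.ne_iff.mp hxz
      exact ⟨n, Finset.mem_univ n, hstrict n hn⟩
  -- combine
  have hsum1 : ∑ n, ((1/2)*r n*(w n)^2 + lam n * φ (w n) (a n))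
      = (1/2) * ∑ n, r n * (w n)^2 + ∑ n, lam n * φ (w n) (a n) := by
    rw [Finset.sum_add_distrib, Finset.mul_sum]
    congr 1
    exact Finset.sum_congr rfl fun n _ => by ring
  have hsum2 : ∑ n, ((1/2)*r n*(x n)^2 + lam n * φ (x n) (a n))
      = (1/2) * ∑ n, r n * (x n)^2 + ∑ n, lam n * φ (x n) (a n) := by
    rw [Finset.sum_add_distrib, Finset.mul_sum]
    congr 1
    exact Finset.sum_congr rfl fun n _ => by ring
  have hsum3 : ∑ n, ((1/2)*r n*(z n)^2 + lam n * φ (z n) (a n))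
      = (1/2) * ∑ n, r n * (z n)^2 + ∑ n, lam n * φ (z n) (a n) := by
    rw [Finset.sum_add_distrib, Finset.mul_sum]
    congr 1
    exact Finset.sum_congr rfl fun n _ => by ring
  rw [hsum1, hsum2, hsum3] at hD
  have hts0 : (0:ℝ) < t * s := mul_pos ht hs
  have hCmul : t*s * ∑ n, r n * (x n - z n)^2 ≤ t*s * ∑ m, (H.mulVec x m - H.mulVec z m)^2 :=
    mul_le_mul_of_nonneg_left hC hts0.le
  nlinarith [hA, hB, hD, hCmul]
end

section
/- Let H be a real M × N matrix, y ∈ ℝ^M, λ₀,…,λ_{N−1} > 0, and let R be a positive definite diagonal N × N matrix with diagonal entries r₀,…,r_{N−1} > 0 such that HᵀH − R is positive semidefinite. If 0 < aₙ < rₙ/λₙ for each n, then F(x) = ½‖y − Hx‖₂² + Σ_{n=0}^{N−1} λₙ φ_log(xₙ; aₙ) is strictly convex on ℝ^N, where φ_log(x; a) = (1/a)·log(1 + a|x|). -/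
open Matrix

-- convexity of the 1D function h on Ici 0
lemma hfun_convex {a : ℝ} (ha : 0 < a) :
    ConvexOn ℝ (Set.Ici 0) (fun s : ℝ => a/2 * s^2 + (1/a) * Real.log (1 + a * s)) := by
  have hpos : ∀ x : ℝ, x ∈ Set.Ici (0:ℝ) → (0:ℝ) < 1 + a * x := by
    intro x hx
    have : 0 ≤ a * x := mul_nonneg ha.le hx
    linarith
  have hderivAt : ∀ x : ℝ, 0 < 1 + a * x →
      HasDerivAt (fun s : ℝ => a/2 * s^2 + (1/a) * Real.log (1 + a * s))
        (a * x + 1/(1 + a * x)) x := by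
    intro x hx
    have h1 : HasDerivAt (fun s : ℝ => a/2 * s^2) (a * x) x := by
      have := (hasDerivAt_pow 2 x).const_mul (a/2)
      simpa using this.congr_deriv (by ring)
    have h2 : HasDerivAt (fun s : ℝ => 1 + a * s) a x := by
      simpa using ((hasDerivAt_id x).const_mul a).const_add 1
    have h3 : HasDerivAt (fun s : ℝ => Real.log (1 + a * s)) (a / (1 + a * x)) x :=
      h2.log hx.ne'
    have h4 := h3.const_mul (1/a)
    have := h1.add h4
    convert this using 1
    · rfl
    · rfl
    · rfl
    field_simp
  apply MonotoneOn.convexOn_of_deriv (convex_Ici 0)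
  · intro x hx
    exact ((hderivAt x (hpos x hx)).continuousAt).continuousWithinAt
  · intro x hx
    rw [interior_Ici] at hx
    exact ((hderivAt x (hpos x (Set.mem_Ici.2 (le_of_lt hx)))).differentiableAt).differentiableWithinAt
  · intro u hu v hv huv
    rw [interior_Ici] at hu hv
    rw [(hderivAt u (hpos u (Set.mem_Ici.2 hu.le))).deriv, (hderivAt v (hpos v (Set.mem_Ici.2 hv.le))).deriv]
    have hP : (1:ℝ) ≤ 1 + a * u := by nlinarith [mul_pos ha hu]
    have hQ : (1:ℝ) ≤ 1 + a * v := by nlinarith [mul_pos ha hv]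
    have h1 : 1/(1 + a*u) - 1/(1 + a*v) = (a*(v-u)) / ((1+a*u)*(1+a*v)) := by
      field_simp; ring
    have h2 : (a*(v-u)) / ((1+a*u)*(1+a*v)) ≤ a*(v-u) :=
      div_le_self (by nlinarith) (by nlinarith)
    nlinarith

-- ψ(u) = a/2 u² + (1/a) log(1+a|u|) is convex on ℝ
lemma psi_convex {a : ℝ} (ha : 0 < a) :
    ConvexOn ℝ Set.univ (fun u : ℝ => a/2 * u^2 + (1/a) * Real.log (1 + a * |u|)) := by
  have hconv := hfun_convex ha
  have hmono : MonotoneOn (fun s : ℝ => a/2 * s^2 + (1/a) * Real.log (1 + a * s)) (Set.Ici 0) := by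
    intro u hu v hv huv
    simp only
    have h1 : u^2 ≤ v^2 := by nlinarith [hu.out]
    have h2 : Real.log (1 + a*u) ≤ Real.log (1 + a*v) := by
      apply Real.log_le_log (by nlinarith [mul_nonneg ha.le hu.out])
      nlinarith
    have := one_div_pos.2 ha
    nlinarith
  refine ⟨convex_univ, ?_⟩
  intro u _ v _ t s ht hs hts
  simp only [smul_eq_mul]
  have habs : |t * u + s * v| ≤ t * |u| + s * |v| := by
    calc |t*u + s*v| ≤ |t*u| + |s*v| := abs_add_le _ _
    _ = t*|u| + s*|v| := by rw [abs_mul, abs_mul, abs_of_nonneg ht, abs_of_nonneg hs]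
  have hmem1 : t*|u| + s*|v| ∈ Set.Ici (0:ℝ) :=
    Set.mem_Ici.2 (add_nonneg (mul_nonneg ht (abs_nonneg u)) (mul_nonneg hs (abs_nonneg v)))
  have step1 := hmono (Set.mem_Ici.2 (abs_nonneg _)) hmem1 habs
  have step2 := hconv.2 (Set.mem_Ici.2 (abs_nonneg u)) (Set.mem_Ici.2 (abs_nonneg v)) ht hs hts
  simp only [smul_eq_mul] at step2
  have := step1.trans step2
  simpa [sq_abs] using this

-- the strict 1D lemma
lemma strict1D {r lam a : ℝ} (hr : 0 < r) (hlam : 0 < lam) (ha : 0 < a) (hra : lam * a < r) :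
    StrictConvexOn ℝ Set.univ
      (fun u : ℝ => r/2 * u^2 + lam * ((1/a) * Real.log (1 + a * |u|))) := by
  have hsq : StrictConvexOn ℝ Set.univ (fun u : ℝ => (r - lam*a)/2 * u^2) := by
    have h := Even.strictConvexOn_pow (even_two) (two_ne_zero)
    refine ⟨convex_univ, ?_⟩
    intro u _ v _ huv t s ht hs hts
    have := h.2 (Set.mem_univ u) (Set.mem_univ v) huv ht hs hts
    simp only [smul_eq_mul] at this ⊢
    have hc : 0 < (r - lam*a)/2 := by linarith
    nlinarith [this]
  have hpsi : ConvexOn ℝ Set.univ (fun u : ℝ => lam * (a/2 * u^2 + (1/a) * Real.log (1 + a * |u|))) := by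
    have := (psi_convex ha).smul hlam.le
    simpa [smul_eq_mul] using this
  have := hsq.add_convexOn hpsi
  convert this using 1
  · rfl
  funext u
  simp only [Pi.add_apply]
  ring

/-- If `R = diag(r)` with `r n > 0` satisfies `HᵀH - R ⪰ 0` and `0 < aₙ < rₙ/λₙ`,
then the cost with logarithmic penalty `φ_log(x; a) = (1/a)·log(1 + a|x|)` is
strictly convex. -/
theorem strictConvex_log_penalty_cost
    (M N : ℕ) (H : Matrix (Fin M) (Fin N) ℝ) (y : Fin M → ℝ)
    (lam r a : Fin N → ℝ)
    (hlam : ∀ n, 0 < lam n) (hr : ∀ n, 0 < r n)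
    (hR : (Hᵀ * H - Matrix.diagonal r).PosSemidef)
    (ha : ∀ n, 0 < a n) (ha' : ∀ n, a n < r n / lam n) :
    StrictConvexOn ℝ Set.univ
      (fun x : Fin N → ℝ =>
        (1/2) * ∑ m, (y m - H.mulVec x m)^2
          + ∑ n, lam n * ((1 / a n) * Real.log (1 + a n * |x n|))) := by
  have hkey : ∀ n : Fin N, lam n * a n < r n := by
    intro n
    have := (lt_div_iff₀ (hlam n)).mp (ha' n)
    linarith [this]
  refine ⟨convex_univ, ?_⟩
  intro x _ z _ hxz t s ht hs hts
  have hs1 : s = 1 - t := by linarith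
  subst hs1
  simp only [Pi.add_apply, Pi.smul_apply, smul_eq_mul]
  -- quadratic part identity
  have hSA : ∑ m, (y m - H.mulVec (t • x + (1-t) • z) m)^2
      = t * ∑ m, (y m - H.mulVec x m)^2 + (1-t) * ∑ m, (y m - H.mulVec z m)^2
        - (t*(1-t)) * ∑ m, (H.mulVec x m - H.mulVec z m)^2 := by
    rw [Finset.mul_sum, Finset.mul_sum, Finset.mul_sum, ← Finset.sum_add_distrib,
      ← Finset.sum_sub_distrib]
    refine Finset.sum_congr rfl fun m _ => ?_
    have hm : H.mulVec (t • x + (1-t) • z) m = t * H.mulVec x m + (1-t) * H.mulVec z m := by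
      simp [Matrix.mulVec_add, Matrix.mulVec_smul]
    rw [hm]; ring
  -- PSD inequality
  have hPSD : ∑ n, r n * (x n - z n)^2 ≤ ∑ m, (H.mulVec x m - H.mulVec z m)^2 := by
    have h0 := hR.dotProduct_mulVec_nonneg (x - z)
    rw [star_trivial, Matrix.sub_mulVec, dotProduct_sub] at h0
    have e1 : (x - z) ⬝ᵥ (Hᵀ * H) *ᵥ (x - z) = ∑ m, (H.mulVec x m - H.mulVec z m)^2 := by
      rw [← Matrix.mulVec_mulVec, Matrix.dotProduct_mulVec, Matrix.vecMul_transpose]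
      simp only [dotProduct, Matrix.mulVec_sub, Pi.sub_apply]
      exact Finset.sum_congr rfl fun m _ => by ring
    have e2 : (x - z) ⬝ᵥ (Matrix.diagonal r) *ᵥ (x - z) = ∑ n, r n * (x n - z n)^2 := by
      simp only [dotProduct, Matrix.mulVec_diagonal, Pi.sub_apply]
      exact Finset.sum_congr rfl fun n _ => by ring
    rw [e1, e2] at h0
    linarith
  -- strict inequality for the separable part
  have hub : ∀ n : Fin N,
      r n/2 * (t * x n + (1-t) * z n)^2
        + lam n * ((1 / a n) * Real.log (1 + a n * |t * x n + (1-t) * z n|))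
      ≤ t * (r n/2 * (x n)^2 + lam n * ((1 / a n) * Real.log (1 + a n * |x n|)))
        + (1-t) * (r n/2 * (z n)^2 + lam n * ((1 / a n) * Real.log (1 + a n * |z n|))) := by
    intro n
    by_cases hne : x n = z n
    · rw [hne]
      have hmid : t * z n + (1-t) * z n = z n := by ring
      rw [hmid]
      set A := r n/2 * (z n)^2 + lam n * ((1 / a n) * Real.log (1 + a n * |z n|)) with hA
      linarith [hA]
    · have := (strict1D (hr n) (hlam n) (ha n) (hkey n)).2 (Set.mem_univ (x n))
        (Set.mem_univ (z n)) hne ht hs (by ring)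
      simp only [smul_eq_mul] at this
      exact this.le
  obtain ⟨n0, hn0⟩ := Function.ne_iff.mp hxz
  have hlt : r n0/2 * (t * x n0 + (1-t) * z n0)^2
        + lam n0 * ((1 / a n0) * Real.log (1 + a n0 * |t * x n0 + (1-t) * z n0|))
      < t * (r n0/2 * (x n0)^2 + lam n0 * ((1 / a n0) * Real.log (1 + a n0 * |x n0|)))
        + (1-t) * (r n0/2 * (z n0)^2 + lam n0 * ((1 / a n0) * Real.log (1 + a n0 * |z n0|))) := by
    have := (strict1D (hr n0) (hlam n0) (ha n0) (hkey n0)).2 (Set.mem_univ (x n0))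
      (Set.mem_univ (z n0)) hn0 ht hs (by ring)
    simpa only [smul_eq_mul] using this
  have hsumB : ∑ n, (r n/2 * (t * x n + (1-t) * z n)^2
        + lam n * ((1 / a n) * Real.log (1 + a n * |t * x n + (1-t) * z n|)))
      < ∑ n, (t * (r n/2 * (x n)^2 + lam n * ((1 / a n) * Real.log (1 + a n * |x n|)))
        + (1-t) * (r n/2 * (z n)^2 + lam n * ((1 / a n) * Real.log (1 + a n * |z n|)))) :=
    Finset.sum_lt_sum (fun n _ => hub n) ⟨n0, Finset.mem_univ n0, hlt⟩
  -- split sums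
  have eL : ∑ n, (r n/2 * (t * x n + (1-t) * z n)^2
        + lam n * ((1 / a n) * Real.log (1 + a n * |t * x n + (1-t) * z n|)))
      = (∑ n, r n/2 * (t * x n + (1-t) * z n)^2)
        + ∑ n, lam n * ((1 / a n) * Real.log (1 + a n * |t * x n + (1-t) * z n|)) :=
    Finset.sum_add_distrib
  have eR : ∑ n, (t * (r n/2 * (x n)^2 + lam n * ((1 / a n) * Real.log (1 + a n * |x n|)))
        + (1-t) * (r n/2 * (z n)^2 + lam n * ((1 / a n) * Real.log (1 + a n * |z n|))))
      = t * ((∑ n, r n/2 * (x n)^2) + ∑ n, lam n * ((1 / a n) * Real.log (1 + a n * |x n|)))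
        + (1-t) * ((∑ n, r n/2 * (z n)^2) + ∑ n, lam n * ((1 / a n) * Real.log (1 + a n * |z n|))) := by
    rw [Finset.sum_add_distrib, ← Finset.mul_sum, ← Finset.mul_sum,
      Finset.sum_add_distrib, Finset.sum_add_distrib]
  have eQ : t * (∑ n, r n/2 * (x n)^2) + (1-t) * (∑ n, r n/2 * (z n)^2)
        - (∑ n, r n/2 * (t * x n + (1-t) * z n)^2)
      = (t*(1-t)) * ((1/2) * ∑ n, r n * (x n - z n)^2) := by
    rw [Finset.mul_sum, Finset.mul_sum, Finset.mul_sum, Finset.mul_sum,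
      ← Finset.sum_add_distrib, ← Finset.sum_sub_distrib]
    exact Finset.sum_congr rfl fun n _ => by ring
  have htpos : (0:ℝ) < t * (1-t) := mul_pos ht hs
  have hmul : (t*(1-t)) * ((1/2) * ∑ n, r n * (x n - z n)^2)
      ≤ (t*(1-t)) * ((1/2) * ∑ m, (H.mulVec x m - H.mulVec z m)^2) := by
    apply mul_le_mul_of_nonneg_left _ htpos.le
    linarith
  linarith [hSA, hsumB, eL, eR, eQ, hmul]
end

section
/- Let H be a real M × N matrix, y ∈ ℝ^M, λ₀,…,λ_{N−1} > 0, and let R be a positive definite diagonal N × N matrix with diagonal entries r₀,…,r_{N−1} > 0 such that HᵀH − R is positive semidefinite. If 0 < aₙ < rₙ/λₙ for each n, then F(x) = ½‖y − Hx‖₂² + Σ_{n=0}^{N−1} λₙ φ_atan(xₙ; aₙ) is strictly convex on ℝ^N, where φ_atan(x; a) = (2/(a√3))·(arctan((1 + 2a|x|)/√3) − π/6). -/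
noncomputable def s3 : ℝ := Real.sqrt 3
lemma hs3 : (0:ℝ) < s3 := Real.sqrt_pos.mpr (by norm_num)
lemma hs3sq : s3 ^ 2 = 3 := Real.sq_sqrt (by norm_num)

noncomputable def hfun (lam a u : ℝ) : ℝ :=
  lam * a / 2 * u ^ 2 +
    lam * ((2 / (a * s3)) * (Real.arctan ((1 + 2 * a * u) / s3) - Real.pi / 6))

noncomputable def hfun' (lam a u : ℝ) : ℝ :=
  lam * a * u + lam * ((2 / (a * s3)) * (1 / (1 + ((1 + 2 * a * u) / s3) ^ 2) * (2 * a / s3)))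

noncomputable def hfun'' (lam a u : ℝ) : ℝ :=
  lam * a + lam * ((2 / (a * s3)) *
    ((-(2 * ((1 + 2 * a * u) / s3) ^ 1 * (2 * a / s3)) / (1 + ((1 + 2 * a * u) / s3) ^ 2) ^ 2)
      * (2 * a / s3)))

lemma inner_deriv (a u : ℝ) :
    HasDerivAt (fun u : ℝ => (1 + 2 * a * u) / s3) (2 * a / s3) u := by
  have h1 : HasDerivAt (fun u : ℝ => 1 + 2 * a * u) (2 * a) u := by
    simpa using ((hasDerivAt_id u).const_mul (2 * a)).const_add 1
  exact h1.div_const s3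

lemma hfun_deriv (lam a u : ℝ) : HasDerivAt (hfun lam a) (hfun' lam a u) u := by
  have harc : HasDerivAt (fun u : ℝ => Real.arctan ((1 + 2 * a * u) / s3))
      (1 / (1 + ((1 + 2 * a * u) / s3) ^ 2) * (2 * a / s3)) u :=
    (Real.hasDerivAt_arctan _).comp u (inner_deriv a u)
  have hq : HasDerivAt (fun u : ℝ => lam * a / 2 * u ^ 2) (lam * a * u) u := by
    have := (hasDerivAt_pow 2 u).const_mul (lam * a / 2)
    refine this.congr_deriv ?_; push_cast; ring
  exact hq.add (((harc.sub_const (Real.pi / 6)).const_mul (2 / (a * s3))).const_mul lam)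

lemma hfun'_deriv (lam a u : ℝ) :
    HasDerivAt (hfun' lam a) (hfun'' lam a u) u := by
  have hw := inner_deriv a u
  have hne : 1 + ((1 + 2 * a * u) / s3) ^ 2 ≠ 0 := by positivity
  have hsq : HasDerivAt (fun u : ℝ => 1 + ((1 + 2 * a * u) / s3) ^ 2)
      (2 * ((1 + 2 * a * u) / s3) ^ 1 * (2 * a / s3)) u := by
    simpa using (hw.pow 2).const_add 1
  have hinv : HasDerivAt (fun u : ℝ => (1 + ((1 + 2 * a * u) / s3) ^ 2)⁻¹)
      (-(2 * ((1 + 2 * a * u) / s3) ^ 1 * (2 * a / s3)) / (1 + ((1 + 2 * a * u) / s3) ^ 2) ^ 2)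
      u := hsq.inv hne
  have hlin : HasDerivAt (fun u : ℝ => lam * a * u) (lam * a) u := by
    simpa using (hasDerivAt_id u).const_mul (lam * a)
  have := hlin.add
    (((hinv.mul_const (2 * a / s3)).const_mul (2 / (a * s3))).const_mul lam)
  exact this.congr_of_eventuallyEq (Filter.Eventually.of_forall fun v => by simp [hfun', one_div])

lemma hfun''_nonneg (lam a u : ℝ) (hlam : 0 < lam) (ha : 0 < a) (hu : 0 ≤ u) :
    0 ≤ hfun'' lam a u := by
  have h3 := hs3
  have h3sq := hs3sq
  set s : ℝ := a * u with hs
  have hs0 : 0 ≤ s := by positivity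
  have hden : 1 + ((1 + 2 * a * u) / s3) ^ 2 = 4 * (1 + s + s ^ 2) / 3 := by
    rw [div_pow, h3sq]; field_simp; ring
  rw [hfun'', hden]
  have key : (1 + 2 * s) ≤ (1 + s + s ^ 2) ^ 2 := by nlinarith [sq_nonneg s, sq_nonneg (s*s)]
  have hpos : (0:ℝ) < 1 + s + s ^ 2 := by nlinarith
  have hane : a ≠ 0 := ne_of_gt ha
  have hs3ne : s3 ≠ 0 := ne_of_gt h3
  rw [← sub_nonneg] at key ⊢
  have expand : lam * a + lam * (2 / (a * s3) *
      (-(2 * ((1 + 2 * a * u) / s3) ^ 1 * (2 * a / s3)) / (4 * (1 + s + s ^ 2) / 3) ^ 2 *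
        (2 * a / s3))) - 0
      = (lam * a * ((1 + s + s ^ 2) ^ 2 - (1 + 2 * s))) / (1 + s + s ^ 2) ^ 2 := by
    have h1 : (1 + 2 * a * u) = 1 + 2 * s := by rw [hs]; ring
    rw [h1]
    have h34 : s3 ^ 4 = 9 := by
      rw [show (4:ℕ) = 2*2 from rfl, pow_mul, h3sq]; norm_num
    field_simp
    ring_nf
    rw [h34]
    ring
  rw [expand]
  positivity

lemma hfun'_nonneg (lam a u : ℝ) (hlam : 0 < lam) (ha : 0 < a) (hu : 0 ≤ u) :
    0 ≤ hfun' lam a u := by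
  rw [hfun']
  have h3 := hs3
  have t1 : 0 ≤ lam * a * u := by positivity
  have t2 : 0 ≤ lam * ((2 / (a * s3)) * (1 / (1 + ((1 + 2 * a * u) / s3) ^ 2) * (2 * a / s3))) := by
    positivity
  linarith

lemma hfun_convexOn (lam a : ℝ) (hlam : 0 < lam) (ha : 0 < a) :
    ConvexOn ℝ (Set.Ici 0) (hfun lam a) := by
  refine convexOn_of_hasDerivWithinAt2_nonneg (convex_Ici 0)
    (fun u _ => (hfun_deriv lam a u).continuousAt.continuousWithinAt)
    (fun u _ => (hfun_deriv lam a u).hasDerivWithinAt)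
    (fun u _ => (hfun'_deriv lam a u).hasDerivWithinAt) (fun u hu => ?_)
  rw [interior_Ici] at hu
  exact hfun''_nonneg lam a u hlam ha (le_of_lt hu)

lemma hfun_monotoneOn (lam a : ℝ) (hlam : 0 < lam) (ha : 0 < a) :
    MonotoneOn (hfun lam a) (Set.Ici 0) := by
  refine monotoneOn_of_hasDerivWithinAt_nonneg (convex_Ici 0)
    (fun u _ => (hfun_deriv lam a u).continuousAt.continuousWithinAt)
    (fun u _ => (hfun_deriv lam a u).hasDerivWithinAt) (fun u hu => ?_)
  rw [interior_Ici] at hu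
  exact hfun'_nonneg lam a u hlam ha (le_of_lt hu)

lemma abs_image_univ : (fun t : ℝ => |t|) '' Set.univ = Set.Ici 0 := by
  ext u
  constructor
  · rintro ⟨t, -, rfl⟩; exact abs_nonneg t
  · intro hu; exact ⟨u, Set.mem_univ u, abs_of_nonneg hu⟩

lemma hfun_abs_convexOn (lam a : ℝ) (hlam : 0 < lam) (ha : 0 < a) :
    ConvexOn ℝ Set.univ (fun t : ℝ => hfun lam a |t|) := by
  have habs : ConvexOn ℝ Set.univ (fun t : ℝ => |t|) := by
    refine ⟨convex_univ, fun x _ y _ a b ha hb _ => ?_⟩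
    simp only [smul_eq_mul]
    calc |a * x + b * y| ≤ |a * x| + |b * y| := abs_add_le _ _
      _ = a * |x| + b * |y| := by rw [abs_mul, abs_mul, abs_of_nonneg ha, abs_of_nonneg hb]
  have := ConvexOn.comp (f := fun t : ℝ => |t|) (g := hfun lam a)
    (abs_image_univ ▸ hfun_convexOn lam a hlam ha) habs
    (abs_image_univ ▸ hfun_monotoneOn lam a hlam ha)
  exact this

lemma one_dim_strictConvexOn (lam r a : ℝ) (hlam : 0 < lam) (hr : 0 < r)
    (ha : 0 < a) (hra : lam * a < r) :
    StrictConvexOn ℝ Set.univ (fun t : ℝ =>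
      r / 2 * t ^ 2 + lam * ((2 / (a * Real.sqrt 3)) *
        (Real.arctan ((1 + 2 * a * |t|) / Real.sqrt 3) - Real.pi / 6))) := by
  have hsq : StrictConvexOn ℝ (Set.univ : Set ℝ) (fun t : ℝ => (r - lam * a) / 2 * t ^ 2) := by
    have h2 : StrictConvexOn ℝ (Set.univ : Set ℝ) (fun t : ℝ => t ^ 2) :=
      Even.strictConvexOn_pow even_two two_ne_zero
    refine ⟨convex_univ, fun x hx z hz hxz b c hb hc hbc => ?_⟩
    have := h2.2 hx hz hxz hb hc hbc
    simp only [smul_eq_mul] at this ⊢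
    have hc2 : 0 < (r - lam * a) / 2 := by linarith
    nlinarith
  have hcomb := hsq.add_convexOn (hfun_abs_convexOn lam a hlam ha)
  refine hcomb.congr fun t _ => ?_
  simp only [hfun, s3, Pi.add_apply]
  rw [sq_abs]
  ring
-- Lemma B: sum of coordinatewise strictly convex functions
lemma sum_strictConvexOn {N : ℕ} (g : Fin N → ℝ → ℝ)
    (hg : ∀ n, StrictConvexOn ℝ Set.univ (g n)) :
    StrictConvexOn ℝ Set.univ (fun x : Fin N → ℝ => ∑ n, g n (x n)) := by
  refine ⟨convex_univ, fun x _ z _ hxz a b ha hb hab => ?_⟩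
  obtain ⟨n₀, hn₀⟩ := Function.ne_iff.mp hxz
  simp only [smul_eq_mul, Pi.add_apply, Pi.smul_apply]
  rw [Finset.mul_sum, Finset.mul_sum, ← Finset.sum_add_distrib]
  refine Finset.sum_lt_sum (fun n _ => ?_) ⟨n₀, Finset.mem_univ n₀, ?_⟩
  · by_cases h : x n = z n
    · rw [h, show a * z n + b * z n = z n by rw [← add_mul, hab, one_mul],
        show a * g n (z n) + b * g n (z n) = g n (z n) by rw [← add_mul, hab, one_mul]]
    · have := (hg n).2 (Set.mem_univ (x n)) (Set.mem_univ (z n)) h ha hb hab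
      simpa using this.le
  · have := (hg n₀).2 (Set.mem_univ (x n₀)) (Set.mem_univ (z n₀)) hn₀ ha hb hab
    simpa using this
open Matrix in
lemma quad_convexOn {M N : ℕ} (H : Matrix (Fin M) (Fin N) ℝ) (y : Fin M → ℝ)
    (r : Fin N → ℝ) (hR : (Hᵀ * H - Matrix.diagonal r).PosSemidef) :
    ConvexOn ℝ Set.univ
      (fun x : Fin N → ℝ =>
        (1/2) * ∑ m, (y m - H.mulVec x m)^2 - ∑ n, (r n / 2) * (x n)^2) := by
  refine ⟨convex_univ, fun x _ z _ a b ha hb hab => ?_⟩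
  set d : Fin N → ℝ := x - z with hd
  have hquad := hR.dotProduct_mulVec_nonneg d
  rw [show star d = d from rfl] at hquad
  have hA : d ⬝ᵥ (Hᵀ * H - Matrix.diagonal r).mulVec d
      = ∑ m, (H.mulVec x m - H.mulVec z m)^2 - ∑ n, r n * (d n)^2 := by
    rw [Matrix.sub_mulVec, dotProduct_sub, ← Matrix.mulVec_mulVec,
      Matrix.dotProduct_mulVec, Matrix.vecMul_transpose]
    congr 1
    · simp only [dotProduct, Matrix.mulVec_sub]
      exact Finset.sum_congr rfl fun m _ => by simp [hd, Matrix.mulVec_sub]; ring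
    · simp only [dotProduct, Matrix.mulVec_diagonal]
      exact Finset.sum_congr rfl fun n _ => by ring
  rw [hA] at hquad
  have hmix : ∀ m, H.mulVec (a • x + b • z) m = a * H.mulVec x m + b * H.mulVec z m := by
    intro m
    simp [Matrix.mulVec_add, Matrix.mulVec_smul]
  have hb' : b = 1 - a := by linarith
  have e1 : ∑ m, (y m - H.mulVec (a • x + b • z) m)^2
      = a * ∑ m, (y m - H.mulVec x m)^2 + b * ∑ m, (y m - H.mulVec z m)^2
        - a * b * ∑ m, (H.mulVec x m - H.mulVec z m)^2 := by
    rw [Finset.mul_sum, Finset.mul_sum, Finset.mul_sum, ← Finset.sum_add_distrib,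
      ← Finset.sum_sub_distrib]
    exact Finset.sum_congr rfl fun m _ => by rw [hmix m, hb']; ring
  have e2 : ∑ n, (r n / 2) * ((a • x + b • z) n)^2
      = a * ∑ n, (r n / 2) * (x n)^2 + b * ∑ n, (r n / 2) * (z n)^2
        - a * b * ∑ n, (r n / 2) * (d n)^2 := by
    rw [Finset.mul_sum, Finset.mul_sum, Finset.mul_sum, ← Finset.sum_add_distrib,
      ← Finset.sum_sub_distrib]
    refine Finset.sum_congr rfl fun n _ => ?_
    simp only [Pi.add_apply, Pi.smul_apply, smul_eq_mul, hd, Pi.sub_apply]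
    rw [hb']; ring
  have e3 : ∑ n, (r n / 2) * (d n)^2 = (1/2) * (∑ n, r n * (d n)^2) := by
    rw [Finset.mul_sum]; exact Finset.sum_congr rfl fun n _ => by ring
  simp only [smul_eq_mul]
  rw [e1, e2, e3]
  have hab' : 0 ≤ a * b := mul_nonneg ha hb
  nlinarith [mul_nonneg hab' hquad]

open Matrix

/-- If `R = diag(r)` with `r n > 0` satisfies `HᵀH - R ⪰ 0` and `0 < aₙ < rₙ/λₙ`,
then the cost with arctangent penalty
`φ_atan(x; a) = (2/(a√3))·(arctan((1 + 2a|x|)/√3) − π/6)` is strictly convex. -/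
theorem strictConvex_atan_penalty_cost
    (M N : ℕ) (H : Matrix (Fin M) (Fin N) ℝ) (y : Fin M → ℝ)
    (lam r a : Fin N → ℝ)
    (hlam : ∀ n, 0 < lam n) (hr : ∀ n, 0 < r n)
    (hR : (Hᵀ * H - Matrix.diagonal r).PosSemidef)
    (ha : ∀ n, 0 < a n) (ha' : ∀ n, a n < r n / lam n) :
    StrictConvexOn ℝ Set.univ
      (fun x : Fin N → ℝ =>
        (1/2) * ∑ m, (y m - H.mulVec x m)^2
          + ∑ n, lam n * ((2 / (a n * Real.sqrt 3)) *
              (Real.arctan ((1 + 2 * a n * |x n|) / Real.sqrt 3) - Real.pi / 6))) := by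
  have hra : ∀ n, lam n * a n < r n := fun n => by
    have := (lt_div_iff₀ (hlam n)).mp (ha' n)
    linarith
  have hsum : StrictConvexOn ℝ Set.univ
      (fun x : Fin N → ℝ => ∑ n, (r n / 2 * (x n) ^ 2 + lam n * ((2 / (a n * Real.sqrt 3)) *
        (Real.arctan ((1 + 2 * a n * |x n|) / Real.sqrt 3) - Real.pi / 6)))) :=
    sum_strictConvexOn _ (fun n =>
      one_dim_strictConvexOn (lam n) (r n) (a n) (hlam n) (hr n) (ha n) (hra n))
  have hq := quad_convexOn H y r hR
  have hcomb := hq.add_strictConvexOn hsum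
  refine hcomb.congr fun x _ => ?_
  simp only [Pi.add_apply, Finset.sum_add_distrib]
  ring
end

section
/- Let λ > 0 and let φ : ℝ → ℝ be an even function, continuous on ℝ, twice continuously differentiable on (0, ∞), with right derivative at 0 satisfying φ'(0⁺) ≥ 0. If φ''(x) > −1/λ for all x > 0, then for every y ∈ ℝ the function F(x) = ½(y − x)² + λφ(x) is strictly convex on ℝ. -/
open Set Filter

/-- Algebraic fact about three slopes. -/
lemma slope_mid_aux {f : ℝ → ℝ} {a b c : ℝ} (hab : a < b) (hbc : b < c)
    (h : (f b - f a) / (b - a) < (f c - f b) / (c - b)) :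
    (f b - f a) / (b - a) < (f c - f a) / (c - a) ∧
      (f c - f a) / (c - a) < (f c - f b) / (c - b) := by
  have h1 : 0 < b - a := sub_pos.2 hab
  have h2 : 0 < c - b := sub_pos.2 hbc
  have h3 : 0 < c - a := by linarith
  rw [div_lt_div_iff₀ h1 h2] at h
  constructor
  · rw [div_lt_div_iff₀ h1 h3]; nlinarith
  · rw [div_lt_div_iff₀ h3 h2]; nlinarith

lemma sq_deriv_aux (y z : ℝ) :
    HasDerivAt (fun x : ℝ => (1/2) * (y - x)^2) (z - y) z := by
  have h := (((hasDerivAt_id z).const_sub y).pow 2).const_mul (1/2 : ℝ)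
  refine h.congr_deriv ?_
  norm_num
  ring

lemma aux_Ici (lam : ℝ) (hlam : 0 < lam) (φ φ' φ'' : ℝ → ℝ)
    (hcont : Continuous φ)
    (hderiv1 : ∀ x ∈ Set.Ioi (0:ℝ), HasDerivAt φ (φ' x) x)
    (hderiv2 : ∀ x ∈ Set.Ioi (0:ℝ), HasDerivAt φ' (φ'' x) x)
    (hsec : ∀ x ∈ Set.Ioi (0:ℝ), -(1/lam) < φ'' x) (y : ℝ) :
    StrictConvexOn ℝ (Set.Ici 0)
      (fun x : ℝ => (1/2) * (y - x)^2 + lam * φ x) := by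
  apply strictConvexOn_of_deriv2_pos (convex_Ici 0)
  · exact Continuous.continuousOn (by continuity)
  · rw [interior_Ici]
    intro x hx
    set F : ℝ → ℝ := fun x : ℝ => (1/2) * (y - x)^2 + lam * φ x with hF
    have hF' : ∀ z ∈ Set.Ioi (0:ℝ), HasDerivAt F (z - y + lam * φ' z) z := by
      intro z hz
      exact (sq_deriv_aux y z).add ((hderiv1 z hz).const_mul lam)
    have hF'' : HasDerivAt (fun z : ℝ => z - y + lam * φ' z) (1 + lam * φ'' x) x :=
      ((hasDerivAt_id x).sub_const y).add ((hderiv2 x hx).const_mul lam)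
    have hiter : deriv (deriv F) x = 1 + lam * φ'' x := by
      have h2 : deriv F =ᶠ[nhds x] (fun z : ℝ => z - y + lam * φ' z) :=
        Filter.eventuallyEq_of_mem (Ioi_mem_nhds hx) (fun z hz => (hF' z hz).deriv)
      rw [Filter.EventuallyEq.deriv_eq h2, hF''.deriv]
    have hpos : -(1:ℝ) < lam * φ'' x := by
      have h := (mul_lt_mul_iff_right₀ hlam).2 (hsec x hx)
      rwa [mul_neg, mul_one_div, div_self hlam.ne'] at h
    show 0 < deriv (deriv F) x
    rw [hiter]
    linarith

lemma aux_reflect {f : ℝ → ℝ} (h : StrictConvexOn ℝ (Set.Ici (0:ℝ)) f) :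
    StrictConvexOn ℝ (Set.Iic (0:ℝ)) (fun x => f (-x)) := by
  refine ⟨convex_Iic 0, ?_⟩
  intro x hx z hz hxz a b ha hb hab
  have hx' : -x ∈ Set.Ici (0:ℝ) := Set.mem_Ici.2 (neg_nonneg.2 hx)
  have hz' : -z ∈ Set.Ici (0:ℝ) := Set.mem_Ici.2 (neg_nonneg.2 hz)
  have hxz' : -x ≠ -z := fun hc => hxz (neg_injective hc)
  have key := h.2 hx' hz' hxz' ha hb hab
  have e : a • (-x) + b • (-z) = -(a • x + b • z) := by
    simp only [smul_eq_mul]; ring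
  rw [e] at key
  exact key

/-- If `φ` is even, continuous, twice continuously differentiable on `(0,∞)`,
has right derivative `φ'(0⁺) ≥ 0` at `0`, and `φ''(x) > -1/λ` for `x > 0`,
then `F(x) = ½(y−x)² + λφ(x)` is strictly convex for every `y`. -/
theorem strictConvex_of_second_derivative_bound
    (lam : ℝ) (hlam : 0 < lam)
    (φ φ' φ'' : ℝ → ℝ)
    (heven : ∀ x, φ (-x) = φ x)
    (hcont : Continuous φ)
    (hderiv1 : ∀ x ∈ Set.Ioi (0:ℝ), HasDerivAt φ (φ' x) x)
    (hderiv2 : ∀ x ∈ Set.Ioi (0:ℝ), HasDerivAt φ' (φ'' x) x)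
    (hC2 : ContinuousOn φ'' (Set.Ioi 0))
    (d : ℝ) (hd0 : HasDerivWithinAt φ d (Set.Ici 0) 0) (hdnonneg : 0 ≤ d)
    (hsec : ∀ x ∈ Set.Ioi (0:ℝ), -(1/lam) < φ'' x) :
    ∀ y : ℝ, StrictConvexOn ℝ Set.univ
      (fun x : ℝ => (1/2) * (y - x)^2 + lam * φ x) := by
  intro y
  set F : ℝ → ℝ := fun x : ℝ => (1/2) * (y - x)^2 + lam * φ x with hF
  have SIci : StrictConvexOn ℝ (Set.Ici 0) F :=
    aux_Ici lam hlam φ φ' φ'' hcont hderiv1 hderiv2 hsec y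
  have SIic : StrictConvexOn ℝ (Set.Iic 0) F := by
    have h1 := aux_reflect (aux_Ici lam hlam φ φ' φ'' hcont hderiv1 hderiv2 hsec (-y))
    have heq2 : (fun x : ℝ => (fun u : ℝ => (1/2) * ((-y) - u)^2 + lam * φ u) (-x)) = F := by
      funext x
      show (1/2) * ((-y) - (-x))^2 + lam * φ (-x) = F x
      rw [heven, hF]
      ring
    rwa [heq2] at h1
  -- derivative of F within Ici 0 at 0
  have hFr : HasDerivWithinAt F (-y + lam * d) (Set.Ici 0) 0 := by
    have h := ((sq_deriv_aux y 0).hasDerivWithinAt).add (hd0.const_mul lam)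
    refine h.congr_deriv ?_
    ring
  -- derivative of φ within Iic 0 at 0 is -d
  have hφl : HasDerivWithinAt φ (-d) (Set.Iic 0) 0 := by
    have hneg : HasDerivWithinAt (fun x : ℝ => -x) (-1) (Set.Iic 0) 0 :=
      (hasDerivAt_neg (0:ℝ)).hasDerivWithinAt
    have hd0' : HasDerivWithinAt φ d (Set.Ici 0) ((fun x : ℝ => -x) 0) := by
      simpa using hd0
    have hmaps : Set.MapsTo (fun x : ℝ => -x) (Set.Iic 0) (Set.Ici 0) :=
      fun x hx => Set.mem_Ici.2 (neg_nonneg.2 hx)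
    have hcomp := HasDerivWithinAt.comp 0 hd0' hneg hmaps
    have heq3 : (φ ∘ fun x : ℝ => -x) = φ := funext fun x => heven x
    rw [heq3] at hcomp
    simpa using hcomp
  have hFl : HasDerivWithinAt F (-y - lam * d) (Set.Iic 0) 0 := by
    have h := ((sq_deriv_aux y 0).hasDerivWithinAt).add (hφl.const_mul lam)
    refine h.congr_deriv ?_
    ring
  -- slope bounds at 0
  have hTR : Tendsto (slope F 0) (nhdsWithin 0 (Set.Ioi 0)) (nhds (-y + lam * d)) := by
    have h := hasDerivWithinAt_iff_tendsto_slope.1 hFr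
    rwa [Set.Ici_sdiff_left] at h
  have hTL : Tendsto (slope F 0) (nhdsWithin 0 (Set.Iio 0)) (nhds (-y - lam * d)) := by
    have h := hasDerivWithinAt_iff_tendsto_slope.1 hFl
    rwa [Set.Iic_diff_right] at h
  have claimA : ∀ b : ℝ, 0 < b → -y + lam * d ≤ (F b - F 0) / (b - 0) := by
    intro b hb
    refine le_of_tendsto hTR ?_
    filter_upwards [Ioo_mem_nhdsGT_of_mem (Set.mem_Ico.2 ⟨le_refl (0:ℝ), hb⟩)] with t ht
    have h1 := SIci.slope_strict_mono_adjacent Set.self_mem_Ici (Set.mem_Ici.2 hb.le) ht.1 ht.2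
    have h2 := (slope_mid_aux ht.1 ht.2 h1).1
    have h3 : slope F 0 t = (F t - F 0) / (t - 0) := slope_def_field F 0 t
    linarith
  have claimB : ∀ a : ℝ, a < 0 → (F 0 - F a) / (0 - a) ≤ -y - lam * d := by
    intro a ha
    refine ge_of_tendsto hTL ?_
    filter_upwards [Ioo_mem_nhdsLT_of_mem (Set.mem_Ioc.2 ⟨ha, le_refl (0:ℝ)⟩)] with t ht
    have h1 := SIic.slope_strict_mono_adjacent (Set.mem_Iic.2 ha.le) Set.self_mem_Iic ht.1 ht.2
    have h2 := (slope_mid_aux ht.1 ht.2 h1).2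
    have h3 : slope F 0 t = (F 0 - F t) / (0 - t) := by
      rw [slope_comm]; exact slope_def_field F t 0
    linarith
  have key : ∀ a b : ℝ, a < 0 → 0 < b →
      (F 0 - F a) / (0 - a) < (F b - F 0) / (b - 0) := by
    intro a b ha hb
    have hat : a < a / 2 := by linarith
    have hta : a / 2 < 0 := by linarith
    have h1 := SIic.slope_strict_mono_adjacent (Set.mem_Iic.2 ha.le) Set.self_mem_Iic hat hta
    have h2 := (slope_mid_aux hat hta h1).2
    have h3 := claimB (a / 2) hta
    have h4 := claimA b hb
    have h5 : 0 ≤ lam * d := mul_nonneg hlam.le hdnonneg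
    linarith
  refine strictConvexOn_of_slope_strict_mono_adjacent convex_univ ?_
  intro p q r _ _ hpq hqr
  rcases le_or_gt 0 p with h0p | hp0
  · exact SIci.slope_strict_mono_adjacent (Set.mem_Ici.2 h0p)
      (Set.mem_Ici.2 (by linarith)) hpq hqr
  rcases le_or_gt r 0 with hr0 | h0r
  · exact SIic.slope_strict_mono_adjacent (Set.mem_Iic.2 (by linarith))
      (Set.mem_Iic.2 hr0) hpq hqr
  rcases lt_trichotomy q 0 with hq0 | hq0 | hq0
  · have h1 := SIic.slope_strict_mono_adjacent (Set.mem_Iic.2 hp0.le)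
      Set.self_mem_Iic hpq hq0
    have h2 := key q r hq0 h0r
    have h3 := (slope_mid_aux hq0 h0r h2).1
    linarith
  · subst hq0
    exact key p r hp0 h0r
  · have h1 := key p q hp0 hq0
    have h2 := (slope_mid_aux hp0 hq0 h1).2
    have h3 := SIci.slope_strict_mono_adjacent Set.self_mem_Ici
      (Set.mem_Ici.2 (by linarith)) hq0 hqr
    linarith
end

section
/- Let λ > 0 and 0 < a ≤ 1/λ. Then for every y ∈ ℝ the function F(x) = ½(y − x)² + λ·φ_log(x; a), where φ_log(x; a) = (1/a)·log(1 + a|x|), is strictly convex on ℝ. -/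
open Set

lemma strictConvexOn_abs_comp {g : ℝ → ℝ} (hg : StrictConvexOn ℝ (Set.Ici 0) g)
    (hmono : StrictMonoOn g (Set.Ici 0)) :
    StrictConvexOn ℝ Set.univ (fun x => g |x|) := by
  refine ⟨convex_univ, ?_⟩
  intro x _ z _ hxz t s ht hs hts
  simp only [smul_eq_mul]
  have habs : |t * x + s * z| ≤ t * |x| + s * |z| := by
    calc |t * x + s * z| ≤ |t * x| + |s * z| := abs_add_le _ _
      _ = t * |x| + s * |z| := by
          rw [abs_mul, abs_mul, abs_of_pos ht, abs_of_pos hs]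
  have hmem1 : |t * x + s * z| ∈ Set.Ici (0:ℝ) := Set.mem_Ici.mpr (abs_nonneg _)
  have hmem2 : t * |x| + s * |z| ∈ Set.Ici (0:ℝ) := Set.mem_Ici.mpr (by positivity)
  by_cases hne : |x| = |z|
  · -- then x = -z with z ≠ 0
    rcases abs_eq_abs.mp hne with rfl | rfl
    · exact absurd rfl hxz
    · have hz0 : z ≠ 0 := by rintro rfl; simp at hxz
      have hlt : |t * -z + s * z| < |z| := by
        have : t * -z + s * z = (s - t) * z := by ring
        rw [this, abs_mul]
        have h1 : |s - t| < 1 := by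
          rw [abs_lt]; constructor <;> nlinarith
        have h2 : 0 < |z| := abs_pos.mpr hz0
        nlinarith
      have := hmono hmem1 (by exact abs_nonneg z) hlt
      calc g |t * -z + s * z| < g |z| := this
        _ = t • g |(-z)| + s • g |z| := by rw [abs_neg]; simp only [smul_eq_mul]; linear_combination g |z| * hts.symm
  · have h1 : g |t * x + s * z| ≤ g (t * |x| + s * |z|) :=
      hmono.monotoneOn hmem1 hmem2 habs
    have h2 : g (t * |x| + s * |z|) < t * g |x| + s * g |z| := by
      have := hg.2 (abs_nonneg x) (abs_nonneg z) hne ht hs hts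
      simpa [smul_eq_mul] using this
    simpa [smul_eq_mul] using h1.trans_lt h2

/-- For `λ > 0` and `0 < a ≤ 1/λ`, the scalar cost
`F(x) = ½(y−x)² + λ·(1/a)·log(1 + a|x|)` is strictly convex for every `y`. -/
theorem strictConvex_scalar_log_penalty
    (lam a : ℝ) (hlam : 0 < lam) (ha : 0 < a) (ha' : a ≤ 1 / lam) (y : ℝ) :
    StrictConvexOn ℝ Set.univ
      (fun x : ℝ => (1/2) * (y - x)^2 + lam * ((1/a) * Real.log (1 + a * |x|))) := by
  have hla : lam * a ≤ 1 := by
    rw [le_div_iff₀ hlam] at ha'; linarith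
  set g : ℝ → ℝ := fun t => (1/2) * t^2 + lam * ((1/a) * Real.log (1 + a * t)) with hgdef
  -- derivative facts
  have hderiv : ∀ t : ℝ, 0 ≤ t → HasDerivAt g (t + lam / (1 + a * t)) t := by
    intro t ht
    have hpos : (0:ℝ) < 1 + a * t := by nlinarith
    have h1 : HasDerivAt (fun u : ℝ => (1/2) * u^2) t t := by
      have := (hasDerivAt_pow 2 t).const_mul (1/2 : ℝ)
      simpa using this.congr_deriv (by ring)
    have h2 : HasDerivAt (fun u : ℝ => 1 + a * u) a t := by
      simpa using (hasDerivAt_id t).const_mul a |>.const_add 1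
    have h3 : HasDerivAt (fun u : ℝ => Real.log (1 + a * u)) (a / (1 + a * t)) t :=
      by have h := (Real.hasDerivAt_log hpos.ne').comp t h2; have e : (1 + a * t)⁻¹ * a = a / (1 + a * t) := by ring
         rw [e] at h; exact h
    have h4 : HasDerivAt (fun u : ℝ => lam * ((1/a) * Real.log (1 + a * u)))
        (lam / (1 + a * t)) t := by
      have := (h3.const_mul (1/a : ℝ)).const_mul lam
      refine this.congr_deriv ?_
      field_simp
    exact h1.add h4
  have hcont : ContinuousOn g (Set.Ici 0) := fun t ht =>
    (hderiv t ht).continuousAt.continuousWithinAt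
  -- derivative formula on a neighbourhood of positive points
  have hderiv_eq : ∀ t : ℝ, 0 ≤ t → deriv g t = t + lam / (1 + a * t) := fun t ht =>
    (hderiv t ht).deriv
  have hmono : StrictMonoOn g (Set.Ici 0) := by
    apply strictMonoOn_of_deriv_pos (convex_Ici 0) hcont
    intro t ht
    rw [interior_Ici] at ht
    rw [hderiv_eq t ht.le]
    have : (0:ℝ) < 1 + a * t := by nlinarith [ht.out]
    have : 0 < lam / (1 + a * t) := div_pos hlam this
    nlinarith [ht.out]
  have hconv : StrictConvexOn ℝ (Set.Ici 0) g := by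
    apply strictConvexOn_of_deriv2_pos (convex_Ici 0) hcont
    intro t ht
    rw [interior_Ici] at ht
    have ht' : (0:ℝ) < t := ht
    have hpos : (0:ℝ) < 1 + a * t := by nlinarith
    -- second derivative
    have hEv : deriv g =ᶠ[nhds t] fun u => u + lam / (1 + a * u) := by
      filter_upwards [eventually_gt_nhds ht'] with u hu using hderiv_eq u hu.le
    have hd2 : HasDerivAt (fun u : ℝ => u + lam / (1 + a * u))
        (1 - lam * a / (1 + a * t)^2) t := by
      have h2 : HasDerivAt (fun u : ℝ => 1 + a * u) a t := by
        simpa using (hasDerivAt_id t).const_mul a |>.const_add 1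
      have h3 : HasDerivAt (fun u : ℝ => lam / (1 + a * u))
          (-(lam * a) / (1 + a * t)^2) t := by
        have := (h2.inv hpos.ne').const_mul lam
        refine this.congr_deriv ?_
        field_simp
      have := (hasDerivAt_id t).add h3
      refine this.congr_deriv ?_
      field_simp
      ring
    have : deriv^[2] g t = 1 - lam * a / (1 + a * t)^2 := by
      show deriv (deriv g) t = _
      rw [Filter.EventuallyEq.deriv_eq hEv]
      exact hd2.deriv
    rw [this]
    have hsq : (1:ℝ) < (1 + a * t)^2 := by nlinarith [mul_pos ha ht', sq_nonneg (a*t)]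
    have : lam * a / (1 + a * t)^2 < 1 := by
      rw [div_lt_one (by positivity)]
      nlinarith
    linarith
  have hcomp := strictConvexOn_abs_comp hconv hmono
  -- affine part
  have haff : ConvexOn ℝ (Set.univ : Set ℝ) (fun x : ℝ => (1/2) * y^2 - y * x) := by
    refine ⟨convex_univ, ?_⟩
    intro x _ z _ t s ht hs hts
    simp only [smul_eq_mul]
    apply le_of_eq
    nlinarith [hts]
  have := hcomp.add_convexOn haff
  refine this.congr ?_
  intro x _
  simp only [hgdef, Pi.add_apply]
  rw [sq_abs]
  ring
end

section
/- Let λ > 0 and 0 < a ≤ 1/λ. Then for every y ∈ ℝ the function F(x) = ½(y − x)² + λ·φ_atan(x; a), where φ_atan(x; a) = (2/(a√3))·(arctan((1 + 2a|x|)/√3) − π/6), is strictly convex on ℝ. -/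
lemma hasDerivAt_G (lam a : ℝ) (ha : 0 < a) (t : ℝ) :
    HasDerivAt (fun t : ℝ => (1/2) * t^2
      + lam * ((2 / (a * Real.sqrt 3)) * (Real.arctan ((1 + 2*a*t)/Real.sqrt 3) - Real.pi/6)))
      (t + 4*lam/(3 + (1+2*a*t)^2)) t := by
  have hs3 : (0:ℝ) < Real.sqrt 3 := Real.sqrt_pos.mpr (by norm_num)
  have hs3sq : Real.sqrt 3 ^ 2 = 3 := Real.sq_sqrt (by norm_num)
  have hu : HasDerivAt (fun t : ℝ => (1 + 2*a*t)/Real.sqrt 3) (2*a/Real.sqrt 3) t := by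
    simpa using (((hasDerivAt_id t).const_mul (2*a)).const_add 1).div_const (Real.sqrt 3)
  have harc := (Real.hasDerivAt_arctan ((1 + 2*a*t)/Real.sqrt 3)).comp t hu
  have h1 := ((harc.sub_const (Real.pi/6)).const_mul (2/(a*Real.sqrt 3))).const_mul lam
  have h2 : HasDerivAt (fun t : ℝ => (1/2)*t^2) t t := by
    simpa using ((hasDerivAt_pow 2 t).const_mul (1/2 : ℝ))
  have h3 := h2.add h1
  refine h3.congr_deriv ?_
  have hpos : (0:ℝ) < 1 + ((1+2*a*t)/Real.sqrt 3)^2 := by positivity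
  have hne : (3 + (1+2*a*t)^2) ≠ 0 := by positivity
  field_simp
  ring_nf
  rw [hs3sq]
  ring

lemma hasDerivAt_G' (lam a : ℝ) (t : ℝ) :
    HasDerivAt (fun t : ℝ => t + 4*lam/(3 + (1+2*a*t)^2))
      (1 - 16*lam*a*(1+2*a*t)/(3 + (1+2*a*t)^2)^2) t := by
  have h1 : HasDerivAt (fun t : ℝ => 1+2*a*t) (2*a) t := by
    simpa using ((hasDerivAt_id t).const_mul (2*a)).const_add 1
  have hw : HasDerivAt (fun t : ℝ => 3 + (1+2*a*t)^2) (2*(1+2*a*t)*(2*a)) t := by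
    simpa [mul_comm] using ((h1.pow 2).const_add 3)
  have hne : (3 + (1+2*a*t)^2) ≠ 0 := by positivity
  have h2 := (hasDerivAt_id t).add ((hw.inv hne).const_mul (4*lam))
  refine h2.congr_deriv ?_
  field_simp
  ring

section

variable (lam a : ℝ)

noncomputable def Gfun : ℝ → ℝ := fun t : ℝ => (1/2) * t^2
      + lam * ((2 / (a * Real.sqrt 3)) * (Real.arctan ((1 + 2*a*t)/Real.sqrt 3) - Real.pi/6))

lemma Gfun_cont (ha : 0 < a) : Continuous (Gfun lam a) :=
  continuous_iff_continuousAt.mpr fun t => (hasDerivAt_G lam a ha t).continuousAt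

lemma Gfun_strictMonoOn (hlam : 0 < lam) (ha : 0 < a) :
    StrictMonoOn (Gfun lam a) (Set.Ici 0) := by
  apply strictMonoOn_of_deriv_pos (convex_Ici 0) ((Gfun_cont lam a ha).continuousOn)
  intro t ht
  rw [interior_Ici] at ht
  have hd : HasDerivAt (Gfun lam a) (t + 4*lam/(3 + (1+2*a*t)^2)) t := hasDerivAt_G lam a ha t
  rw [hd.deriv]
  have : (0:ℝ) < 4*lam/(3 + (1+2*a*t)^2) := by positivity
  have ht' : (0:ℝ) < t := ht
  linarith

lemma Gfun_strictConvexOn (hlam : 0 < lam) (ha : 0 < a) (ha' : a ≤ 1 / lam) :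
    StrictConvexOn ℝ (Set.Ici 0) (Gfun lam a) := by
  have hla : lam * a ≤ 1 := by
    rw [le_div_iff₀ hlam] at ha'; linarith
  apply strictConvexOn_of_deriv2_pos (convex_Ici 0) ((Gfun_cont lam a ha).continuousOn)
  intro t ht
  rw [interior_Ici] at ht
  have hderiv : deriv (Gfun lam a) = fun t => t + 4*lam/(3 + (1+2*a*t)^2) :=
    funext fun t => (show HasDerivAt (Gfun lam a) (t + 4*lam/(3 + (1+2*a*t)^2)) t from
      hasDerivAt_G lam a ha t).deriv
  have h2 : deriv (deriv (Gfun lam a)) t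
      = 1 - 16*lam*a*(1+2*a*t)/(3 + (1+2*a*t)^2)^2 := by
    rw [hderiv]; exact (hasDerivAt_G' lam a t).deriv
  show 0 < deriv^[2] (Gfun lam a) t
  rw [Function.iterate_succ, Function.iterate_one, Function.comp_apply, h2]
  set v : ℝ := 1 + 2*a*t with hv
  have ht' : (0:ℝ) < t := ht
  have hv1 : 1 < v := by
    have : 0 < 2*a*t := by positivity
    simp only [hv]; linarith
  have hkey : 16*lam*a*v < (3 + v^2)^2 := by
    have h16 : 16*v < (3+v^2)^2 := by nlinarith [sq_nonneg (v-1), sq_nonneg (v+1), sq_nonneg v]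
    have : 16*lam*a*v ≤ 16*v := by nlinarith
    linarith
  have hden : (0:ℝ) < (3 + v^2)^2 := by positivity
  rw [sub_pos, div_lt_one hden]
  exact hkey

-- g(x) = G(|x|) is strictly convex on univ
lemma gAbs_strictConvexOn (hlam : 0 < lam) (ha : 0 < a) (ha' : a ≤ 1 / lam) :
    StrictConvexOn ℝ Set.univ (fun x : ℝ => Gfun lam a |x|) := by
  have hG := Gfun_strictConvexOn lam a hlam ha ha'
  have hM := Gfun_strictMonoOn lam a hlam ha
  refine ⟨convex_univ, ?_⟩
  intro x _ z _ hxz p q hp hq hpq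
  simp only [smul_eq_mul]
  have hwmem : |p*x + q*z| ∈ Set.Ici (0:ℝ) := Set.mem_Ici.mpr (abs_nonneg _)
  by_cases habs : |x| = |z|
  · -- then x = -z, z ≠ 0
    have hx : x = -z := by
      rcases abs_eq_abs.mp habs with h | h
      · exact absurd h hxz
      · exact h
    have hz0 : z ≠ 0 := by rintro rfl; simp [hx] at hxz
    have hlt : |p*x + q*z| < |z| := by
      rw [hx]
      have : p*(-z) + q*z = (q-p)*z := by ring
      rw [this, abs_mul]
      have h1 : |q - p| < 1 := by
        rw [abs_lt]; constructor <;> linarith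
      have h2 : (0:ℝ) < |z| := abs_pos.mpr hz0
      nlinarith
    have := hM hwmem (Set.mem_Ici.mpr (abs_nonneg z)) hlt
    calc Gfun lam a |p*x + q*z| < Gfun lam a |z| := this
      _ = p * Gfun lam a |x| + q * Gfun lam a |z| := by
          rw [habs]
          have hp1 : p = 1 - q := by linarith
          rw [hp1]; ring
  · have htri : |p*x + q*z| ≤ p*|x| + q*|z| := by
      calc |p*x + q*z| ≤ |p*x| + |q*z| := abs_add_le _ _
        _ = p*|x| + q*|z| := by rw [abs_mul, abs_mul, abs_of_pos hp, abs_of_pos hq]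
    have hmem2 : p*|x| + q*|z| ∈ Set.Ici (0:ℝ) := by
      rw [Set.mem_Ici]
      have := abs_nonneg x; have := abs_nonneg z
      positivity
    have h1 : Gfun lam a |p*x + q*z| ≤ Gfun lam a (p*|x| + q*|z|) :=
      hM.monotoneOn hwmem hmem2 htri
    have h2 := hG.2 (Set.mem_Ici.mpr (abs_nonneg x)) (Set.mem_Ici.mpr (abs_nonneg z))
      habs hp hq hpq
    simp only [smul_eq_mul] at h2
    linarith

end

/-- For `λ > 0` and `0 < a ≤ 1/λ`, the scalar cost
`F(x) = ½(y−x)² + λ·φ_atan(x; a)` with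
`φ_atan(x; a) = (2/(a√3))·(arctan((1 + 2a|x|)/√3) − π/6)`
is strictly convex for every `y`. -/
theorem strictConvex_scalar_atan_penalty
    (lam a : ℝ) (hlam : 0 < lam) (ha : 0 < a) (ha' : a ≤ 1 / lam) (y : ℝ) :
    StrictConvexOn ℝ Set.univ
      (fun x : ℝ => (1/2) * (y - x)^2
        + lam * ((2 / (a * Real.sqrt 3)) *
            (Real.arctan ((1 + 2 * a * |x|) / Real.sqrt 3) - Real.pi / 6))) := by
  have hg := gAbs_strictConvexOn lam a hlam ha ha'
  have haff : ConvexOn ℝ Set.univ (fun x : ℝ => y^2/2 - y*x) := by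
    refine ⟨convex_univ, ?_⟩
    intro u _ v _ p q hp hq hpq
    simp only [smul_eq_mul]
    apply le_of_eq
    have : p = 1 - q := by linarith
    subst this
    ring
  have hsum := hg.add_convexOn haff
  have heq : (fun x : ℝ => (1/2) * (y - x)^2
        + lam * ((2 / (a * Real.sqrt 3)) *
            (Real.arctan ((1 + 2 * a * |x|) / Real.sqrt 3) - Real.pi / 6)))
      = (fun x : ℝ => Gfun lam a |x|) + (fun x : ℝ => y^2/2 - y*x) := by
    funext x
    simp only [Gfun, Pi.add_apply]
    rw [sq_abs]
    ring
  rw [heq]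
  exact hsum
end

section
/- Let λ > 0 and let φ : ℝ → ℝ be an even function, differentiable on ℝ \ {0}, with right derivative φ'(0⁺) at 0, and suppose that for y ∈ ℝ the function F(x) = ½(y − x)² + λφ(x) is strictly convex. If |y| ≤ T, where T = λ·φ'(0⁺), then x = 0 is the unique global minimizer of F. -/
lemma aux_min_right (F : ℝ → ℝ) (hF : StrictConvexOn ℝ Set.univ F)
    (L : ℝ) (hL : 0 ≤ L) (hder : HasDerivWithinAt F L (Set.Ici 0) 0)
    (x : ℝ) (hx : 0 < x) : F 0 < F x := by
  by_contra h
  push_neg at h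
  -- F (x/2) < F 0
  have hmid : F (x / 2) < F 0 := by
    have := hF.2 (Set.mem_univ 0) (Set.mem_univ x) (by positivity : (0:ℝ) ≠ x)
      (by norm_num : (0:ℝ) < 1/2) (by norm_num : (0:ℝ) < 1/2) (by norm_num)
    simp only [smul_eq_mul, mul_zero, zero_add] at this
    calc F (x / 2) = F (1/2 * 0 + 1/2 * x) := by ring_nf
    _ < 1/2 * F 0 + 1/2 * F x := by simpa using this
    _ ≤ F 0 := by linarith
  set x' := x / 2 with hx'
  have hx'pos : 0 < x' := by positivity
  set c := (F x' - F 0) / x' with hc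
  have hcneg : c < 0 := div_neg_of_neg_of_pos (by linarith) hx'pos
  -- slope tends to L within Ioi 0
  have htend : Filter.Tendsto (slope F 0) (nhdsWithin 0 (Set.Ioi 0)) (nhds L) := by
    have := hasDerivWithinAt_iff_tendsto_slope.1 hder
    have hset : Set.Ici (0:ℝ) \ {0} = Set.Ioi 0 := by
      ext t; simp [Set.mem_Ioi, lt_iff_le_and_ne, eq_comm, and_comm]
    rwa [hset] at this
  have hev : ∀ᶠ h in nhdsWithin 0 (Set.Ioi 0), slope F 0 h ≤ c := by
    filter_upwards [inter_mem_nhdsWithin (Set.Ioi 0)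
      (Iio_mem_nhds hx'pos)] with t ht
    obtain ⟨ht0, htx'⟩ := ht
    have := hF.convexOn.secant_mono (Set.mem_univ 0) (Set.mem_univ t)
      (Set.mem_univ x') (ne_of_gt ht0) (ne_of_gt hx'pos) (le_of_lt htx')
    simpa [slope, hc, sub_zero, div_eq_inv_mul] using this
  have : L ≤ c := le_of_tendsto htend hev
  linarith

/-- Thresholding below `T = λ·φ'(0⁺)`: if `F(x) = ½(y−x)² + λφ(x)` is strictly
convex and `|y| ≤ T`, then `x = 0` is the unique global minimizer of `F`. -/
theorem zero_is_unique_minimizer_below_threshold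
    (lam : ℝ) (hlam : 0 < lam)
    (φ : ℝ → ℝ)
    (heven : ∀ x, φ (-x) = φ x)
    (hdiff : ∀ x : ℝ, x ≠ 0 → DifferentiableAt ℝ φ x)
    (d : ℝ) (hd : HasDerivWithinAt φ d (Set.Ici 0) 0)
    (y : ℝ)
    (hF : StrictConvexOn ℝ Set.univ
      (fun x : ℝ => (1/2) * (y - x)^2 + lam * φ x))
    (hy : |y| ≤ lam * d) :
    ∀ x : ℝ, x ≠ 0 →
      (1/2) * (y - 0)^2 + lam * φ 0 < (1/2) * (y - x)^2 + lam * φ x := by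
  intro x hx
  set F : ℝ → ℝ := fun x : ℝ => (1/2) * (y - x)^2 + lam * φ x with hFdef
  obtain ⟨hy1, hy2⟩ := abs_le.1 hy
  -- derivative of the quadratic part
  have hq : ∀ z : ℝ, HasDerivAt (fun x : ℝ => (1/2) * (y - x)^2) (-(y - z)) z := by
    intro z
    have h1 : HasDerivAt (fun x : ℝ => y - x) (-1) z := by
      simpa using (hasDerivAt_id z).const_sub y
    have := (h1.pow 2).const_mul (1/2 : ℝ)
    exact this.congr_deriv (by ring)
  rcases lt_or_gt_of_ne hx with hneg | hpos
  · -- x < 0 : use G t = F (-t)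
    have hφ : φ = fun t => φ (-t) := by funext t; rw [heven]
    have hdneg : HasDerivWithinAt (fun t : ℝ => φ (-t)) (-d) (Set.Iic 0) 0 := by
      have hneg' : HasDerivWithinAt (fun t : ℝ => -t) (-1) (Set.Iic 0) 0 :=
        (hasDerivAt_neg (0:ℝ)).hasDerivWithinAt
      have hmap : Set.MapsTo (fun t : ℝ => -t) (Set.Iic 0) (Set.Ici 0) := by
        intro t ht; simpa using ht
      have := HasDerivWithinAt.comp (0:ℝ) (by simpa using hd) hneg' hmap
      exact (this : HasDerivWithinAt (fun t : ℝ => φ (-t)) (d * -1) (Set.Iic 0) 0).congr_deriv (by ring)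
    set G : ℝ → ℝ := fun t => (1/2) * (-y - t)^2 + lam * φ t with hGdef
    have hGF : ∀ t, G t = F (-t) := by
      intro t
      simp only [hGdef, hFdef]
      rw [← heven t]
      ring_nf
    have hGconv : StrictConvexOn ℝ Set.univ G := by
      constructor
      · exact convex_univ
      · intro a _ b _ hab p q hp hq hpq
        have := hF.2 (Set.mem_univ (-a)) (Set.mem_univ (-b)) (by simpa using hab)
          hp hq hpq
        simp only [smul_eq_mul] at this ⊢
        rw [hGF, hGF, hGF]
        have harg : -(p * a + q * b) = p * -a + q * -b := by ring
        rw [harg]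
        exact this
    have hq2 : HasDerivAt (fun t : ℝ => (1/2) * (-y - t)^2) (-(-y - 0)) 0 := by
      have h1 : HasDerivAt (fun t : ℝ => -y - t) (-1) (0:ℝ) := by
        simpa using (hasDerivAt_id (0:ℝ)).const_sub (-y)
      have := (h1.pow 2).const_mul (1/2 : ℝ)
      exact this.congr_deriv (by ring)
    have hGder : HasDerivWithinAt G (-(-y - 0) + lam * d) (Set.Ici 0) 0 :=
      hq2.hasDerivWithinAt.add (hd.const_mul lam)
    have : G 0 < G (-x) := by
      apply aux_min_right G hGconv _ (by linarith) hGder (-x) (by linarith)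
    rw [hGF, hGF] at this
    rw [neg_zero, neg_neg] at this
    exact this
  · -- x > 0
    have hFder : HasDerivWithinAt F (-(y - 0) + lam * d) (Set.Ici 0) 0 :=
      (hq 0).hasDerivWithinAt.add (hd.const_mul lam)
    show F 0 < F x
    exact aux_min_right F hF _ (by linarith) hFder x hpos
end

section
/- Let λ > 0 and let φ : ℝ → ℝ be an even function, differentiable on ℝ \ {0}, with right derivative φ'(0⁺) at 0, and suppose that for y ∈ ℝ with y > T = λ·φ'(0⁺) the function F(x) = ½(y − x)² + λφ(x) is strictly convex and attains a global minimum at x* ∈ ℝ. Then x* > 0 and x* satisfies the equation y = x* + λ·φ'(x*). -/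
/-- Above the threshold `T = λ·φ'(0⁺)`: if `y > T` and the strictly convex
`F(x) = ½(y−x)² + λφ(x)` attains its global minimum at `x*`, then `x* > 0` and
`y = x* + λ·φ'(x*)`. -/
theorem minimizer_above_threshold
    (lam : ℝ) (hlam : 0 < lam)
    (φ : ℝ → ℝ)
    (heven : ∀ x, φ (-x) = φ x)
    (hdiff : ∀ x : ℝ, x ≠ 0 → DifferentiableAt ℝ φ x)
    (d : ℝ) (hd : HasDerivWithinAt φ d (Set.Ici 0) 0)
    (y : ℝ) (hy : lam * d < y)
    (hF : StrictConvexOn ℝ Set.univ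
      (fun x : ℝ => (1/2) * (y - x)^2 + lam * φ x))
    (xs : ℝ)
    (hmin : ∀ x : ℝ,
      (1/2) * (y - xs)^2 + lam * φ xs ≤ (1/2) * (y - x)^2 + lam * φ x) :
    0 < xs ∧ y = xs + lam * deriv φ xs := by
  set F : ℝ → ℝ := fun x : ℝ => (1/2) * (y - x)^2 + lam * φ x with hFdef
  -- strict convexity inequality: for x ≠ 0, lam*φ 0 < x^2/2 + lam*φ x
  have hstrict : ∀ x : ℝ, x ≠ 0 → lam * φ 0 < (1/2) * x^2 + lam * φ x := by
    intro x hx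
    have hne : x ≠ -x := by intro h; apply hx; linarith [h]
    have h := hF.2 (Set.mem_univ x) (Set.mem_univ (-x)) hne
      (by norm_num : (0:ℝ) < 1/2) (by norm_num : (0:ℝ) < 1/2) (by norm_num)
    simp only [hFdef, smul_eq_mul, heven x] at h
    have h0 : (1/2 : ℝ) * x + (1/2) * (-x) = 0 := by ring
    rw [h0] at h
    nlinarith [h]
  -- derivative of F within Ici 0 at 0
  have hdF0 : HasDerivWithinAt F (lam * d - y) (Set.Ici 0) 0 := by
    have h1 : HasDerivAt (fun x : ℝ => (1/2) * (y - x)^2) (-(y - 0)) 0 := by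
      have h0 : HasDerivAt (fun x : ℝ => y - x) (-1) 0 := (hasDerivAt_id 0).const_sub y
      have h2 := (h0.fun_pow 2).const_mul (1/2 : ℝ)
      refine h2.congr_deriv ?_
      push_cast
      ring
    have h3 := h1.hasDerivWithinAt.add (hd.const_mul lam)
    refine h3.congr_deriv ?_
    ring
  have hslope := hasDerivWithinAt_iff_tendsto_slope.mp hdF0
  have hset : Set.Ici (0:ℝ) \ {0} = Set.Ioi 0 := by
    ext z
    simp only [Set.mem_diff, Set.mem_Ici, Set.mem_singleton_iff, Set.mem_Ioi]
    constructor
    · rintro ⟨h1, h2⟩; exact lt_of_le_of_ne h1 (Ne.symm h2)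
    · intro h; exact ⟨le_of_lt h, ne_of_gt h⟩
  rw [hset] at hslope
  -- Step A: lam * d ≥ 0, hence y > 0
  have hld : 0 ≤ lam * d := by
    have hev : ∀ᶠ z in nhdsWithin 0 (Set.Ioi (0:ℝ)), -y ≤ slope F 0 z := by
      filter_upwards [self_mem_nhdsWithin] with z hz
      have hz' : (0:ℝ) < z := hz
      have hs := hstrict z (ne_of_gt hz')
      rw [slope_def_field, sub_zero, le_div_iff₀ hz']
      simp only [hFdef]
      nlinarith
    have := ge_of_tendsto hslope hev
    linarith
  have hy0 : 0 < y := lt_of_le_of_lt hld hy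
  -- Step B1 : xs ≠ 0
  have hne0 : xs ≠ 0 := by
    intro h0
    have hneg : lam * d - y < 0 := by linarith
    have hev : ∀ᶠ z in nhdsWithin 0 (Set.Ioi (0:ℝ)),
        slope F 0 z < 0 ∧ z ∈ Set.Ioi (0:ℝ) :=
      (hslope.eventually (gt_mem_nhds hneg)).and self_mem_nhdsWithin
    obtain ⟨z, hz1, hz2⟩ := hev.exists
    have hz' : (0:ℝ) < z := hz2
    rw [slope_def_field, sub_zero, div_lt_iff₀ hz'] at hz1
    have := hmin z
    rw [h0] at this
    simp only [hFdef] at this hz1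
    nlinarith
  -- Step B2 : xs > 0
  have hxs : 0 < xs := by
    rcases lt_trichotomy xs 0 with h | h | h
    · exfalso
      have := hmin (-xs)
      rw [heven xs] at this
      nlinarith
    · exact absurd h hne0
    · exact h
  -- Step C: first-order condition
  have hder : HasDerivAt F (-(y - xs) + lam * deriv φ xs) xs := by
    have h1 : HasDerivAt (fun x : ℝ => (1/2) * (y - x)^2) (-(y - xs)) xs := by
      have h0 : HasDerivAt (fun x : ℝ => y - x) (-1) xs := (hasDerivAt_id xs).const_sub y
      have h2 := (h0.fun_pow 2).const_mul (1/2 : ℝ)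
      refine h2.congr_deriv ?_
      ring
    exact h1.add (((hdiff xs hne0).hasDerivAt).const_mul lam)
  have hloc : IsLocalMin F xs := by
    apply IsMinOn.isLocalMin (s := Set.univ)
    · intro x _; exact hmin x
    · exact Filter.univ_mem
  have hzero := hloc.hasDerivAt_eq_zero hder
  exact ⟨hxs, by linarith⟩
end

section
/- Let λ > 0, 0 < a ≤ 1/λ, and y ≥ λ. Then the function F(x) = ½(y − x)² + (λ/a)·log(1 + a|x|) attains its unique global minimum over ℝ at x* = y/2 − 1/(2a) + √((y/2 + 1/(2a))² − λ/a). -/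
set_option maxHeartbeats 1000000


/-- Explicit formula for the logarithmic threshold function: for `λ > 0`,
`0 < a ≤ 1/λ` and `y ≥ λ`, the cost `F(x) = ½(y−x)² + (λ/a)·log(1 + a|x|)`
attains its unique global minimum at
`x* = y/2 − 1/(2a) + √((y/2 + 1/(2a))² − λ/a)`. -/
theorem log_threshold_explicit_minimizer
    (lam a y : ℝ) (hlam : 0 < lam) (ha : 0 < a) (ha' : a ≤ 1 / lam) (hy : lam ≤ y)
    (F : ℝ → ℝ)
    (hF : F = fun x : ℝ => (1/2) * (y - x)^2 + (lam / a) * Real.log (1 + a * |x|))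
    (xs : ℝ)
    (hxs : xs = y/2 - 1/(2*a) + Real.sqrt ((y/2 + 1/(2*a))^2 - lam/a)) :
    ∀ x : ℝ, x ≠ xs → F xs < F x := by
  have hy0 : 0 < y := lt_of_lt_of_le hlam hy
  have ha0 : (a : ℝ) ≠ 0 := ne_of_gt ha
  have hat : a * (1/(2*a)) = 1/2 := by field_simp
  set s : ℝ := Real.sqrt ((y/2 + 1/(2*a))^2 - lam/a) with hs
  have hDkey : (y/2 + 1/(2*a))^2 - lam/a = (y/2 - 1/(2*a))^2 + (y - lam)/a := by
    field_simp
    ring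
  have hDnn : 0 ≤ (y/2 + 1/(2*a))^2 - lam/a := by
    rw [hDkey]
    have : 0 ≤ (y - lam)/a := div_nonneg (by linarith) ha.le
    nlinarith [sq_nonneg (y/2 - 1/(2*a))]
  have hs0 : 0 ≤ s := Real.sqrt_nonneg _
  have hs2 : s^2 = (y/2 + 1/(2*a))^2 - lam/a := Real.sq_sqrt hDnn
  clear_value s
  have hs2a : a * s^2 = a * (y/2 - 1/(2*a))^2 + (y - lam) := by
    rw [hs2]; field_simp; ring
  have ht2 : (y/2 - 1/(2*a))^2 ≤ s^2 := by
    have h1 : a * (y/2 - 1/(2*a))^2 ≤ a * s^2 := by linarith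
    exact le_of_mul_le_mul_left h1 ha
  have hst : y/2 - 1/(2*a) ≤ s := by
    nlinarith [hs0, ht2]
  have hst2 : -(y/2 - 1/(2*a)) ≤ s := by
    nlinarith [hs0, ht2]
  have hxs0 : 0 ≤ xs := by rw [hxs]; linarith
  have haxs : a * xs = a*y/2 - 1/2 + a*s := by
    rw [hxs]; field_simp
  have hroot : a*xs^2 + (1-a*y)*xs + (lam - y) = 0 := by
    rw [hxs]
    linear_combination hs2a - 2*((y/2 - 1/(2*a)) + s) * hat
  set G : ℝ → ℝ := fun x => (1/2) * (y - x)^2 + (lam / a) * Real.log (1 + a * x) with hGdef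
  have hG : ∀ x : ℝ, 0 < 1 + a * x → HasDerivAt G (x - y + lam/(1 + a*x)) x := by
    intro x hx
    have h1 : HasDerivAt (fun x : ℝ => (1/2) * (y - x)^2) (x - y) x := by
      have hd : HasDerivAt (fun x : ℝ => y - x) (-1) x := (hasDerivAt_id x).const_sub y
      have := (hd.pow 2).const_mul (1/2 : ℝ)
      refine this.congr_deriv ?_
      ring
    have hl : HasDerivAt (fun x : ℝ => 1 + a * x) a x := by
      simpa using ((hasDerivAt_id x).const_mul a).const_add 1
    have h2 : HasDerivAt (fun x : ℝ => Real.log (1 + a * x)) (a / (1 + a*x)) x :=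
      hl.log (ne_of_gt hx)
    have := h1.add (h2.const_mul (lam / a))
    rw [hGdef]
    refine this.congr_deriv ?_
    field_simp
  clear_value G
  have hpos1 : ∀ x : ℝ, 0 ≤ x → 0 < 1 + a * x := by
    intro x hx
    nlinarith [mul_nonneg ha.le hx]
  have hderiv_eq : ∀ x : ℝ, 0 < 1 + a * x →
      x - y + lam/(1 + a*x) = (a*x^2 + (1-a*y)*x + (lam - y))/(1 + a*x) := by
    intro x hx
    rw [eq_div_iff hx.ne', add_mul, div_mul_cancel₀ _ hx.ne']
    ring
  have hfact : ∀ x : ℝ, a*x^2 + (1-a*y)*x + (lam - y)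
      = (x - xs)*(a*(x+xs) + 1 - a*y) + (a*xs^2 + (1-a*y)*xs + (lam - y)) := by
    intro x; ring
  have hcont : ∀ x : ℝ, 0 ≤ x → ContinuousAt G x := fun x hx =>
    (hG x (hpos1 x hx)).continuousAt
  have hmono : StrictMonoOn G (Set.Ici xs) := by
    apply strictMonoOn_of_deriv_pos (convex_Ici xs)
    · exact fun x hx => (hcont x (le_trans hxs0 hx)).continuousWithinAt
    · intro x hx
      rw [interior_Ici] at hx
      have hx0 : 0 ≤ x := le_of_lt (lt_of_le_of_lt hxs0 hx)
      have hpx := hpos1 x hx0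
      rw [(hG x hpx).deriv, hderiv_eq x hpx]
      apply div_pos _ hpx
      rw [hfact x, hroot, add_zero]
      apply mul_pos (sub_pos.2 hx)
      nlinarith [mul_pos ha (sub_pos.2 hx), mul_nonneg ha.le hs0, haxs]
  have hanti : StrictAntiOn G (Set.Icc 0 xs) := by
    apply strictAntiOn_of_deriv_neg (convex_Icc 0 xs)
    · exact fun x hx => (hcont x hx.1).continuousWithinAt
    · intro x hx
      rw [interior_Icc] at hx
      obtain ⟨hx0, hxlt⟩ := hx
      have hpx := hpos1 x hx0.le
      rw [(hG x hpx).deriv, hderiv_eq x hpx]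
      apply div_neg_of_neg_of_pos _ hpx
      rw [hfact x, hroot, add_zero]
      apply mul_neg_of_neg_of_pos (sub_neg.2 hxlt)
      nlinarith [mul_pos ha hx0, mul_nonneg ha.le (sub_nonneg.2 hst), haxs, hat]
  have key : ∀ x : ℝ, 0 ≤ x → x ≠ xs → G xs < G x := by
    intro x hx0 hne
    rcases lt_or_gt_of_ne hne with hlt | hgt
    · exact hanti ⟨hx0, hlt.le⟩ ⟨hxs0, le_rfl⟩ hlt
    · exact hmono (Set.self_mem_Ici) hgt.le hgt
  have hFG : ∀ x : ℝ, 0 ≤ x → F x = G x := by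
    intro x hx
    rw [hF, hGdef]
    simp [abs_of_nonneg hx]
  intro x hne
  rcases le_or_gt 0 x with hx0 | hx0
  · rw [hFG x hx0, hFG xs hxs0]
    exact key x hx0 hne
  · have hFx : F x = (1/2) * (y - x)^2 + (lam / a) * Real.log (1 + a * (-x)) := by
      rw [hF]; simp [abs_of_neg hx0]
    have h1 : G (-x) < F x := by
      rw [hFx, hGdef]
      simp only
      have : (1/2 : ℝ) * (y - (-x))^2 < (1/2) * (y - x)^2 := by nlinarith
      linarith
    have h2 : G xs ≤ G (-x) := by
      rcases eq_or_ne (-x) xs with heq | hne2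
      · rw [heq]
      · exact (key (-x) (by linarith) hne2).le
    rw [hFG xs hxs0]
    linarith
end

section
/- Let λ > 0 and let φ : ℝ → ℝ be an even function that is differentiable on (0,∞) with φ'(0⁺) existing. Define f : (0,∞) → ℝ by f(x) = x + λφ'(x). If f is strictly increasing on (0,∞) and φ'(0⁺) ≥ 0, then for every y ∈ ℝ the function F(x) = ½(y − x)² + λφ(x) is strictly convex on ℝ. -/
open Set Filter Topology

/-- If `φ` is even, differentiable on `(0,∞)` with derivative `φ'`, has right
derivative `φ'(0⁺) = d ≥ 0` at `0`, and `f(x) = x + λφ'(x)` is strictly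
increasing on `(0,∞)`, then `F(x) = ½(y−x)² + λφ(x)` is strictly convex for
every `y`. -/
theorem strictConvex_of_strictMono_f
    (lam : ℝ) (hlam : 0 < lam)
    (φ φ' : ℝ → ℝ)
    (heven : ∀ x, φ (-x) = φ x)
    (hderiv : ∀ x ∈ Set.Ioi (0:ℝ), HasDerivAt φ (φ' x) x)
    (d : ℝ) (hd0 : HasDerivWithinAt φ d (Set.Ici 0) 0) (hdnonneg : 0 ≤ d)
    (hmono : StrictMonoOn (fun x : ℝ => x + lam * φ' x) (Set.Ioi 0)) :
    ∀ y : ℝ, StrictConvexOn ℝ Set.univ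
      (fun x : ℝ => (1/2) * (y - x)^2 + lam * φ x) := by
  -- φ has derivative -(φ'(-x)) at negative points
  have hφeq : (fun t : ℝ => φ (-t)) = φ := funext heven
  have hderiv_neg : ∀ x : ℝ, x < 0 → HasDerivAt φ (-(φ' (-x))) x := by
    intro x hx
    have h1 : HasDerivAt (fun t : ℝ => φ (-t)) (φ' (-x) * (-1)) x :=
      (hderiv (-x) (by simpa using hx)).comp x (hasDerivAt_neg x)
    rw [hφeq] at h1
    simpa using h1
  -- continuity of φ
  have hcontφ : Continuous φ := by
    rw [continuous_iff_continuousAt]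
    intro x
    rcases lt_trichotomy x 0 with hx | hx | hx
    · exact (hderiv_neg x hx).continuousAt
    · subst hx
      have h1 : ContinuousWithinAt φ (Ici 0) 0 := hd0.continuousWithinAt
      have h2 : ContinuousWithinAt φ (Iic 0) 0 := by
        have h3 : ContinuousWithinAt (fun t : ℝ => φ (-t)) (Iic 0) 0 := by
          refine ContinuousWithinAt.comp (by simpa using h1)
            (continuous_neg.continuousWithinAt) ?_
          intro t ht
          simpa using ht
        rwa [hφeq] at h3
      have h4 := h2.union h1
      rwa [Iic_union_Ici, continuousWithinAt_univ] at h4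
    · exact (hderiv x hx).continuousAt
  -- claim A: lam * d ≤ f c for c > 0
  have claimA : ∀ c : ℝ, 0 < c → lam * d ≤ c + lam * φ' c := by
    intro c hc
    have hslope : Tendsto (fun t : ℝ => (φ t - φ 0) / t) (𝓝[>] 0) (𝓝 d) := by
      have h1 := hasDerivWithinAt_iff_tendsto_slope.1 hd0
      rw [Ici_sdiff_left] at h1
      have h2 : ∀ t : ℝ, slope φ 0 t = (φ t - φ 0) / t := by
        intro t; simp [slope_def_field]
      rwa [show (fun t : ℝ => (φ t - φ 0) / t) = slope φ 0 from funext fun t => (h2 t).symm]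
    have hev : ∀ᶠ t in 𝓝[>] (0:ℝ), lam * ((φ t - φ 0) / t) ≤ c + lam * φ' c := by
      filter_upwards [Ioo_mem_nhdsGT_of_mem (by constructor <;> simp [hc] : (0:ℝ) ∈ Ico 0 c)]
        with t ht
      obtain ⟨ξ, hξ, hξe⟩ := exists_hasDerivAt_eq_slope φ φ' ht.1
        (hcontφ.continuousOn)
        (fun x hx => hderiv x hx.1)
      have h1 : ξ + lam * φ' ξ < c + lam * φ' c :=
        hmono hξ.1 hc (hξ.2.trans ht.2)
      have h2 : φ' ξ = (φ t - φ 0) / t := by simpa using hξe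
      have h3 : lam * φ' ξ ≤ ξ + lam * φ' ξ := by linarith [hξ.1.le]
      rw [← h2]
      linarith
    exact le_of_tendsto (hslope.const_mul lam) hev
  have claimA' : ∀ c : ℝ, 0 < c → lam * d < c + lam * φ' c := by
    intro c hc
    have h1 := claimA (c/2) (by linarith)
    have h2 : (c/2) + lam * φ' (c/2) < c + lam * φ' c :=
      hmono (by simpa using half_pos hc) hc (by linarith)
    linarith
  intro y
  set F : ℝ → ℝ := fun x => (1/2) * (y - x)^2 + lam * φ x with hFdef
  set g : ℝ → ℝ := fun x => x - y + lam * (if 0 < x then φ' x else -(φ' (-x))) with hgdef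
  have hcontF : Continuous F := by
    apply Continuous.add
    · fun_prop
    · exact continuous_const.mul hcontφ
  have hq : ∀ x : ℝ, HasDerivAt (fun x : ℝ => (1/2) * (y - x)^2) (x - y) x := by
    intro x
    have h1 : HasDerivAt (fun x : ℝ => y - x) (-1) x := (hasDerivAt_id x).const_sub y
    have h2 : HasDerivAt (fun x : ℝ => (1/2) * (y - x)^2) (1 / 2 * (↑2 * (y - x) ^ (2 - 1) * -1)) x :=
      (h1.pow 2).const_mul (1/2 : ℝ)
    convert h2 using 1
    norm_num; ring
  have hFd : ∀ x : ℝ, x ≠ 0 → HasDerivAt F (g x) x := by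
    intro x hx
    rcases hx.lt_or_gt with h | h
    · have h1 := (hq x).add ((hderiv_neg x h).const_mul lam)
      simp only [hgdef, if_neg (not_lt.mpr h.le)]
      exact h1
    · have h1 := (hq x).add ((hderiv x h).const_mul lam)
      simp only [hgdef, if_pos h]
      exact h1
  -- g is "strictly increasing" off 0
  have hgmono : ∀ c c' : ℝ, c ≠ 0 → c' ≠ 0 → c < c' → g c < g c' := by
    intro c c' hc hc' hlt
    rcases hc.lt_or_gt with h | h
    · rcases hc'.lt_or_gt with h' | h'
      · have h1 : (-c') + lam * φ' (-c') < (-c) + lam * φ' (-c) :=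
          hmono (by simpa using h') (by simpa using h) (by linarith)
        simp only [hgdef, if_neg (not_lt.mpr h.le), if_neg (not_lt.mpr h'.le)]
        linarith
      · have h1 := claimA' (-c) (by linarith)
        have h2 := claimA' c' h'
        have h3 : 0 ≤ lam * d := mul_nonneg hlam.le hdnonneg
        simp only [hgdef, if_neg (not_lt.mpr h.le), if_pos h']
        linarith
    · have h' : 0 < c' := h.trans hlt
      have h1 : c + lam * φ' c < c' + lam * φ' c' := hmono h h' hlt
      simp only [hgdef, if_pos h, if_pos h']
      linarith
  -- MVT off zero
  have hmvt : ∀ a b : ℝ, a < b → (0 ≤ a ∨ b ≤ 0) →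
      ∃ c ∈ Ioo a b, g c = (F b - F a) / (b - a) ∧ c ≠ 0 := by
    intro a b hab hside
    have hne : ∀ x ∈ Ioo a b, x ≠ (0:ℝ) := by
      intro x hx
      rcases hside with h | h
      · exact ne_of_gt (lt_of_le_of_lt h hx.1)
      · exact ne_of_lt (lt_of_lt_of_le hx.2 h)
    obtain ⟨c, hc, hce⟩ := exists_hasDerivAt_eq_slope F g hab hcontF.continuousOn
      (fun x hx => hFd x (hne x hx))
    exact ⟨c, hc, hce, hne c hc⟩
  -- key slope bounds
  have key : ∀ a b : ℝ, a < b →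
      ∃ cl ∈ Ioo a b, ∃ cu ∈ Ioo a b, cl ≠ 0 ∧ cu ≠ 0 ∧
        g cl ≤ (F b - F a) / (b - a) ∧ (F b - F a) / (b - a) ≤ g cu := by
    intro a b hab
    by_cases h0 : a < 0 ∧ 0 < b
    · obtain ⟨c1, hc1, hc1e, hc1ne⟩ := hmvt a 0 h0.1 (Or.inr le_rfl)
      obtain ⟨c2, hc2, hc2e, hc2ne⟩ := hmvt 0 b h0.2 (Or.inl le_rfl)
      have hglt : g c1 < g c2 := hgmono c1 c2 hc1ne hc2ne (hc1.2.trans hc2.1)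
      have hFa : F 0 - F a = g c1 * (-a) := by
        rw [hc1e]; field_simp
        rw [zero_sub, div_neg, mul_div_assoc, div_self (ne_of_lt h0.1)]; ring
      have hFb : F b - F 0 = g c2 * b := by
        rw [hc2e]; field_simp
        rw [sub_zero, mul_div_assoc, div_self (ne_of_gt h0.2), mul_one]
      have hsum : F b - F a = g c1 * (-a) + g c2 * b := by linarith
      have hba : 0 < b - a := by linarith
      refine ⟨c1, ⟨hc1.1, hc1.2.trans h0.2⟩, c2, ⟨h0.1.trans hc2.1, hc2.2⟩,
        hc1ne, hc2ne, ?_, ?_⟩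
      · rw [le_div_iff₀ hba, hsum]
        nlinarith [h0.1, h0.2, hglt.le]
      · rw [div_le_iff₀ hba, hsum]
        nlinarith [h0.1, h0.2, hglt.le]
    · have hside : 0 ≤ a ∨ b ≤ 0 := by
        rcases lt_or_ge a 0 with h | h
        · right
          by_contra hb
          exact h0 ⟨h, lt_of_not_ge hb⟩
        · left; exact h
      obtain ⟨c, hc, hce, hcne⟩ := hmvt a b hab hside
      exact ⟨c, hc, c, hc, hcne, hcne, hce.le, hce.ge⟩
  refine strictConvexOn_of_slope_strict_mono_adjacent convex_univ ?_
  intro x w z _ _ hxw hwz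
  obtain ⟨_, _, cu, hcu, _, hcune, _, hup⟩ := key x w hxw
  obtain ⟨cl, hcl, _, _, hclne, _, hlo, _⟩ := key w z hwz
  have hg : g cu < g cl := hgmono cu cl hcune hclne (hcu.2.trans hcl.1)
  calc (F w - F x) / (w - x) ≤ g cu := hup
    _ < g cl := hg
    _ ≤ (F z - F w) / (z - w) := hlo
end

section
/- Let H be a real M × N matrix, y ∈ ℝ^M, λ₀,…,λ_{N−1} > 0, and for each n let φₙ : ℝ → ℝ be even, continuous, and differentiable on ℝ \ {0} with one-sided derivatives φₙ'(0⁻) and φₙ'(0⁺) at 0. Suppose F(x) = ½‖y − Hx‖₂² + Σ_{n=0}^{N−1} λₙ φₙ(xₙ) is convex on ℝ^N. If x* ∈ ℝ^N satisfies, for every n: (i) [Hᵀ(y − Hx*)]ₙ = λₙ·φₙ'(xₙ*) whenever xₙ* ≠ 0, and (ii) [Hᵀ(y − Hx*)]ₙ ∈ [λₙ·φₙ'(0⁻), λₙ·φₙ'(0⁺)] whenever xₙ* = 0, then x* is a global minimizer of F. -/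
open Matrix

/-- Optimality conditions: if the cost
`F(x) = ½‖y − Hx‖² + Σₙ λₙ φₙ(xₙ)` is convex and `x*` satisfies
`[Hᵀ(y − Hx*)]ₙ = λₙ φₙ'(xₙ*)` whenever `xₙ* ≠ 0` and
`[Hᵀ(y − Hx*)]ₙ ∈ [λₙ φₙ'(0⁻), λₙ φₙ'(0⁺)]` whenever `xₙ* = 0`,
then `x*` is a global minimizer of `F`. -/
theorem optimality_conditions_global_minimizer
    (M N : ℕ) (H : Matrix (Fin M) (Fin N) ℝ) (y : Fin M → ℝ)
    (lam : Fin N → ℝ) (hlam : ∀ n, 0 < lam n)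
    (φ : Fin N → ℝ → ℝ)
    (heven : ∀ n x, φ n (-x) = φ n x)
    (hcont : ∀ n, Continuous (φ n))
    (hdiff : ∀ n, ∀ x : ℝ, x ≠ 0 → DifferentiableAt ℝ (φ n) x)
    (dm dp : Fin N → ℝ)
    (hdm : ∀ n, HasDerivWithinAt (φ n) (dm n) (Set.Iic 0) 0)
    (hdp : ∀ n, HasDerivWithinAt (φ n) (dp n) (Set.Ici 0) 0)
    (F : (Fin N → ℝ) → ℝ)
    (hF : F = fun x : Fin N → ℝ =>
      (1/2) * ∑ m, (y m - H.mulVec x m)^2 + ∑ n, lam n * φ n (x n))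
    (hFconv : ConvexOn ℝ Set.univ F)
    (xs : Fin N → ℝ)
    (hopt1 : ∀ n, xs n ≠ 0 →
      Hᵀ.mulVec (y - H.mulVec xs) n = lam n * deriv (φ n) (xs n))
    (hopt2 : ∀ n, xs n = 0 →
      lam n * dm n ≤ Hᵀ.mulVec (y - H.mulVec xs) n ∧
      Hᵀ.mulVec (y - H.mulVec xs) n ≤ lam n * dp n) :
    ∀ x : Fin N → ℝ, F xs ≤ F x := by
  intro x
  set v : Fin N → ℝ := x - xs with hv
  set c : Fin N → ℝ := Hᵀ.mulVec (y - H.mulVec xs) with hc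
  classical
  set ψ : Fin N → ℝ := fun n =>
    if xs n ≠ 0 then deriv (φ n) (xs n) * v n
    else if 0 ≤ v n then dp n * v n else dm n * v n with hψ
  set D : ℝ := (-∑ n, c n * v n) + ∑ n, lam n * ψ n with hD
  -- D is nonnegative
  have hD0 : 0 ≤ D := by
    have hDeq : D = ∑ n, (lam n * ψ n - c n * v n) := by
      rw [hD, Finset.sum_sub_distrib]; ring
    rw [hDeq]
    apply Finset.sum_nonneg
    intro n _
    by_cases h : xs n = 0
    · rcases hopt2 n h with ⟨h1, h2⟩
      simp only [hψ, h, ne_eq, not_true_eq_false, if_false]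
      split_ifs with hvn
      · nlinarith
      · push_neg at hvn; nlinarith
    · have hψn : ψ n = deriv (φ n) (xs n) * v n := by simp [hψ, h]
      have hcn : c n = lam n * deriv (φ n) (xs n) := by rw [hc]; exact hopt1 n h
      rw [hψn, hcn]; ring_nf; exact le_refl _
  -- derivative of the quadratic part
  have hsumeq : ∀ a : Fin M → ℝ, ∑ m, a m * H.mulVec v m = ∑ n, Hᵀ.mulVec a n * v n := by
    intro a
    simp only [Matrix.mulVec, dotProduct, Matrix.transpose_apply, Finset.mul_sum,
      Finset.sum_mul]
    rw [Finset.sum_comm]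
    exact Finset.sum_congr rfl fun n _ => Finset.sum_congr rfl fun m _ => by ring
  have hsq : ∀ m : Fin M, HasDerivAt (fun t : ℝ => (y m - H.mulVec xs m - t * H.mulVec v m)^2)
      (-(2 * (y m - H.mulVec xs m) * H.mulVec v m)) 0 := by
    intro m
    have h1 : HasDerivAt (fun t : ℝ => y m - H.mulVec xs m - t * H.mulVec v m)
        (-(H.mulVec v m)) 0 := by
      simpa using ((hasDerivAt_id (0:ℝ)).mul_const (H.mulVec v m)).const_sub
        (y m - H.mulVec xs m)
    have h2 := h1.fun_pow 2
    simpa using h2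
  have hquad : HasDerivWithinAt
      (fun t : ℝ => (1/2) * ∑ m, (y m - H.mulVec (xs + t • v) m)^2)
      (-∑ n, c n * v n) (Set.Ici 0) 0 := by
    have hquadeq : (fun t : ℝ => (1/2) * ∑ m, (y m - H.mulVec (xs + t • v) m)^2)
        = fun t : ℝ => (1/2) * ∑ m, (y m - H.mulVec xs m - t * H.mulVec v m)^2 := by
      funext t; congr 1
      apply Finset.sum_congr rfl; intro m _
      rw [Matrix.mulVec_add, Matrix.mulVec_smul]
      simp only [Pi.add_apply, Pi.smul_apply, smul_eq_mul]
      ring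
    rw [hquadeq]
    have hsum := (HasDerivAt.fun_sum (fun m (_ : m ∈ Finset.univ) => hsq m)).const_mul (1/2 : ℝ)
    have hval : (1/2 : ℝ) * ∑ m, -(2 * (y m - H.mulVec xs m) * H.mulVec v m)
        = -∑ n, c n * v n := by
      have e1 : ∑ m, -(2 * (y m - H.mulVec xs m) * H.mulVec v m)
          = -2 * ∑ m, (y - H.mulVec xs) m * H.mulVec v m := by
        rw [Finset.mul_sum]
        apply Finset.sum_congr rfl; intro m _
        simp only [Pi.sub_apply]; ring
      rw [e1, hsumeq (y - H.mulVec xs), ← hc]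
      ring
    rw [hval] at hsum
    exact hsum.hasDerivWithinAt
  -- derivative of each penalty term
  have hpen : ∀ n : Fin N, HasDerivWithinAt
      (fun t : ℝ => lam n * φ n (xs n + t * v n)) (lam n * ψ n) (Set.Ici 0) 0 := by
    intro n
    have hinner : HasDerivAt (fun t : ℝ => xs n + t * v n) (v n) 0 := by
      simpa using ((hasDerivAt_id (0:ℝ)).mul_const (v n)).const_add (xs n)
    by_cases h : xs n = 0
    · rcases lt_trichotomy (v n) 0 with hvn | hvn | hvn
      · -- v n < 0 : use left derivative
        have hψn : ψ n = dm n * v n := by simp [hψ, h, not_le.mpr hvn]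
        have hmaps : Set.MapsTo (fun t : ℝ => xs n + t * v n) (Set.Ici 0) (Set.Iic 0) := by
          intro t ht
          simp only [Set.mem_Ici] at ht
          simp only [Set.mem_Iic, h, zero_add]
          exact mul_nonpos_of_nonneg_of_nonpos ht hvn.le
        have hφ : HasDerivWithinAt (φ n) (dm n) (Set.Iic 0)
            ((fun t : ℝ => xs n + t * v n) 0) := by simpa [h] using hdm n
        have hcomp := hφ.comp (0:ℝ) hinner.hasDerivWithinAt hmaps
        rw [hψn]
        simpa [Function.comp] using hcomp.const_mul (lam n)
      · -- v n = 0 : constant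
        have hψn : ψ n = 0 := by simp [hψ, h, hvn]
        have hconst : (fun t : ℝ => lam n * φ n (xs n + t * v n))
            = fun _ : ℝ => lam n * φ n 0 := by
          funext t; rw [h, hvn]; ring_nf
        rw [hψn, hconst, mul_zero]
        exact hasDerivWithinAt_const 0 _ _
      · -- v n > 0 : use right derivative
        have hψn : ψ n = dp n * v n := by simp [hψ, h, hvn.le]
        have hmaps : Set.MapsTo (fun t : ℝ => xs n + t * v n) (Set.Ici 0) (Set.Ici 0) := by
          intro t ht
          simp only [Set.mem_Ici] at ht ⊢
          rw [h, zero_add]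
          exact mul_nonneg ht hvn.le
        have hφ : HasDerivWithinAt (φ n) (dp n) (Set.Ici 0)
            ((fun t : ℝ => xs n + t * v n) 0) := by simpa [h] using hdp n
        have hcomp := hφ.comp (0:ℝ) hinner.hasDerivWithinAt hmaps
        rw [hψn]
        simpa [Function.comp] using hcomp.const_mul (lam n)
    · -- xs n ≠ 0 : differentiable
      have hψn : ψ n = deriv (φ n) (xs n) * v n := by simp [hψ, h]
      have hφ : HasDerivAt (φ n) (deriv (φ n) (xs n))
          ((fun t : ℝ => xs n + t * v n) 0) := by
        simpa using (hdiff n (xs n) h).hasDerivAt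
      have hcomp := hφ.comp (0:ℝ) hinner
      rw [hψn]
      exact ((by simpa [Function.comp] using hcomp.const_mul (lam n) :
        HasDerivAt (fun t : ℝ => lam n * φ n (xs n + t * v n))
          (lam n * (deriv (φ n) (xs n) * v n)) 0)).hasDerivWithinAt
  -- derivative of g t = F (xs + t • v)
  have hg : HasDerivWithinAt (fun t : ℝ => F (xs + t • v)) D (Set.Ici 0) 0 := by
    have hgdef : (fun t : ℝ => F (xs + t • v))
        = fun t : ℝ => (1/2) * ∑ m, (y m - H.mulVec (xs + t • v) m)^2
          + ∑ n, lam n * φ n (xs n + t * v n) := by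
      funext t; rw [hF]
      simp [Pi.add_apply, Pi.smul_apply, smul_eq_mul]
    rw [hgdef, hD]
    exact hquad.add (HasDerivWithinAt.fun_sum (fun n (_ : n ∈ Finset.univ) => hpen n))
  -- convexity slope bound
  have hslope := hasDerivWithinAt_iff_tendsto_slope.mp hg
  have hIci : Set.Ici (0:ℝ) \ {0} = Set.Ioi 0 := by
    ext t
    simp only [Set.mem_diff, Set.mem_Ici, Set.mem_singleton_iff, Set.mem_Ioi]
    constructor
    · rintro ⟨h1, h2⟩; exact lt_of_le_of_ne h1 (Ne.symm h2)
    · intro ht; exact ⟨ht.le, ne_of_gt ht⟩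
  rw [hIci] at hslope
  have hub : ∀ᶠ t in nhdsWithin 0 (Set.Ioi (0:ℝ)),
      slope (fun t : ℝ => F (xs + t • v)) 0 t ≤ F x - F xs := by
    have h1 : Set.Ioo (0:ℝ) 1 ∈ nhdsWithin 0 (Set.Ioi (0:ℝ)) := by
      have := inter_mem_nhdsWithin (Set.Ioi (0:ℝ)) (Iio_mem_nhds (one_pos))
      rwa [Set.Ioi_inter_Iio] at this
    filter_upwards [h1] with t ht
    have ht0 : (0:ℝ) < t := ht.1
    have ht1 : t < 1 := ht.2
    have hconv := hFconv.2 (Set.mem_univ xs) (Set.mem_univ x)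
      (by linarith : (0:ℝ) ≤ 1 - t) ht0.le (by ring)
    have heq : (1 - t) • xs + t • x = xs + t • v := by
      funext n
      simp only [Pi.add_apply, Pi.smul_apply, smul_eq_mul, hv, Pi.sub_apply]
      ring
    rw [heq] at hconv
    rw [slope_def_field]
    have h0 : xs + (0:ℝ) • v = xs := by simp
    rw [h0]
    rw [sub_zero, div_le_iff₀ ht0]
    simp only [smul_eq_mul] at hconv
    nlinarith [hconv]
  have hle : D ≤ F x - F xs := le_of_tendsto hslope hub
  linarith
end
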